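/- arXiv:2203.02443 — 7 statements merged into one kernel-verified Lean document; each statement's English description precedes it below -/
import Mathlib

section
/- Let a_0 ≥ a_1 ≥ ... ≥ a_{m-1} > 0. The greedy (circular symmetric) permutation maximises the sum of products of pairs of cyclically adjacent entries: for every permutation σ of {0,...,m-1}, P_2(σ_greedy; a) ≥ P_2(σ; a), where P_2(σ; a) = ∑_{k=0}^{m-1} a_{σ⁻¹(k)} a_{σ⁻¹(k+1 mod m)} and σ_greedy is defined by σ_greedy⁻¹(i) = 2i and σ_greedy⁻¹(m-1-i) = 2i+1 for 0 ≤ i ≤ ⌊m/2⌋ - 1. -/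
/-- The cyclic `r`-product sum `P_r(σ; a) = ∑_{k=0}^{m-1} ∏_{i=0}^{r-1} a_{σ⁻¹((k+i) mod m)}`. -/
noncomputable def cyclicP (m r : ℕ) (σ : Equiv.Perm (Fin m)) (a : Fin m → ℝ) : ℝ :=
  ∑ k : Fin m, ∏ i ∈ Finset.range r,
    a (σ.symm ⟨((k : ℕ) + i) % m, Nat.mod_lt _ k.pos⟩)

/-- `g` is the greedy (circular symmetric) permutation: `g⁻¹(i) = 2i` and
`g⁻¹(m-1-i) = 2i+1` for `0 ≤ i ≤ ⌊m/2⌋ - 1`. -/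
def IsGreedy {m : ℕ} (g : Equiv.Perm (Fin m)) : Prop :=
  ∀ i : Fin m,
    ((i : ℕ) < m / 2 → ((g.symm i : ℕ)) = 2 * (i : ℕ)) ∧
    (m - 1 - (i : ℕ) < m / 2 → ((g.symm i : ℕ)) = 2 * (m - 1 - (i : ℕ)) + 1)


namespace Stmt3Aux

open Finset

set_option linter.unusedSectionVars false
set_option maxHeartbeats 1000000

variable {m : ℕ} [NeZero m]

/-- counting function: number of positions `k` holding an index `≤ s` whose successor
position holds an index `≤ t`. -/
def Ncnt (m : ℕ) [NeZero m] (σ : Equiv.Perm (Fin m)) (s t : ℕ) : ℕ :=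
  (Finset.univ.filter
    (fun k : Fin m => ((σ.symm k : ℕ) ≤ s ∧ ((σ.symm (k+1) : ℕ)) ≤ t))).card

lemma succ_val (hm : 2 ≤ m) (k : Fin m) :
    ((k+1 : Fin m) : ℕ) = ((k:ℕ)+1) % m := by
  rw [Fin.val_add, Fin.val_one', Nat.one_mod_eq_one.mpr (by omega)]

open Fin.NatCast in
lemma exists_exit (B : Finset (Fin m)) (hne : B.Nonempty) (hnu : B ≠ univ) :
    ∃ k ∈ B, k + 1 ∉ B := by
  by_contra h
  push_neg at h
  have hstep : ∀ (n : ℕ) (k : Fin m), k ∈ B → k + (n : Fin m) ∈ B := by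
    intro n
    induction n with
    | zero => simp
    | succ n ih =>
      intro k hk
      have hcast : (((n+1 : ℕ)) : Fin m) = (n : Fin m) + 1 := by push_cast; ring
      rw [hcast, ← add_assoc]
      exact h _ (ih k hk)
  apply hnu
  rw [Finset.eq_univ_iff_forall]
  intro y
  obtain ⟨x, hx⟩ := hne
  have := hstep ((y - x : Fin m) : ℕ) x hx
  rwa [Fin.cast_val_eq_self, add_sub_cancel] at this

lemma cyc_bound (B : Finset (Fin m)) (hne : B.Nonempty) (hnu : B ≠ univ) :
    (univ.filter (fun k : Fin m => k ∈ B ∧ k + 1 ∈ B)).card ≤ B.card - 1 := by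
  obtain ⟨k0, hk0, hk0'⟩ := exists_exit B hne hnu
  have hsub : (univ.filter (fun k : Fin m => k ∈ B ∧ k + 1 ∈ B)) ⊆ B.erase k0 := by
    intro k hk
    simp only [mem_filter, mem_univ, true_and] at hk
    refine Finset.mem_erase.2 ⟨?_, hk.1⟩
    rintro rfl; exact hk0' hk.2
  calc _ ≤ (B.erase k0).card := Finset.card_le_card hsub
    _ = B.card - 1 := Finset.card_erase_of_mem hk0

lemma card_val_le (s : ℕ) (hs : s < m) :
    (univ.filter (fun p : Fin m => (p : ℕ) ≤ s)).card = s + 1 := by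
  rw [Finset.card_filter]
  rw [Fin.sum_univ_eq_sum_range (fun x => if x ≤ s then 1 else 0) m]
  rw [← Finset.card_filter]
  have : (range m).filter (fun x => x ≤ s) = range (s+1) := by
    ext x; simp [Finset.mem_filter, Finset.mem_range]; omega
  rw [this, Finset.card_range]

lemma card_shift (P : Fin m → Prop) [DecidablePred P] :
    (univ.filter (fun k : Fin m => P (k+1))).card = (univ.filter P).card := by
  have : (univ.filter (fun k : Fin m => P (k+1)))
      = (univ.filter P).map (Equiv.subRight (1:Fin m)).toEmbedding := by
    ext k
    simp only [Finset.mem_map, mem_filter, mem_univ, true_and,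
      Equiv.coe_toEmbedding, Equiv.subRight_apply]
    constructor
    · intro hk; exact ⟨k+1, hk, by abel⟩
    · rintro ⟨j, hj, rfl⟩; simpa [sub_add_cancel] using hj
  rw [this, Finset.card_map]

lemma cardS (τ : Equiv.Perm (Fin m)) (s : ℕ) (hs : s < m) :
    (univ.filter (fun k : Fin m => (τ.symm k : ℕ) ≤ s)).card = s + 1 := by
  have himg : (univ.filter (fun k : Fin m => (τ.symm k : ℕ) ≤ s))
      = (univ.filter (fun p : Fin m => (p : ℕ) ≤ s)).image τ := by
    ext k
    simp only [mem_filter, mem_univ, true_and, Finset.mem_image]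
    constructor
    · intro hk; exact ⟨τ.symm k, hk, τ.apply_symm_apply k⟩
    · rintro ⟨p, hp, rfl⟩; simpa using hp
  rw [himg, Finset.card_image_of_injective _ τ.injective, card_val_le s hs]

lemma cardS' (τ : Equiv.Perm (Fin m)) (s : ℕ) (hs : s < m) :
    (univ.filter (fun k : Fin m => (τ.symm (k+1) : ℕ) ≤ s)).card = s + 1 := by
  rw [card_shift (fun k => (τ.symm k : ℕ) ≤ s), cardS τ s hs]

lemma Ntop (τ : Equiv.Perm (Fin m)) (s : ℕ) (hs : s < m) :
    Ncnt m τ s (m-1) = s + 1 ∧ Ncnt m τ (m-1) s = s + 1 := by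
  constructor
  · rw [Ncnt, ← cardS τ s hs]
    congr 1
    apply Finset.filter_congr
    intro k _
    have := (τ.symm (k+1)).isLt
    simp only [and_iff_left_iff_imp]
    intro; omega
  · rw [Ncnt, ← cardS' τ s hs]
    congr 1
    apply Finset.filter_congr
    intro k _
    have := (τ.symm k).isLt
    simp only [and_iff_right_iff_imp]
    intro; omega

lemma Nle₁ (τ : Equiv.Perm (Fin m)) (s t : ℕ) (hs : s < m) :
    Ncnt m τ s t ≤ s + 1 := by
  rw [Ncnt, ← cardS τ s hs]
  apply Finset.card_le_card
  intro k hk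
  simp only [mem_filter, mem_univ, true_and] at hk ⊢
  exact hk.1

lemma Nle₂ (τ : Equiv.Perm (Fin m)) (s t : ℕ) (hs : s < m) :
    Ncnt m τ t s ≤ s + 1 := by
  rw [Ncnt, ← cardS' τ s hs]
  apply Finset.card_le_card
  intro k hk
  simp only [mem_filter, mem_univ, true_and] at hk ⊢
  exact hk.2

lemma Ndiag (τ : Equiv.Perm (Fin m)) (t : ℕ) (ht : t + 1 < m) :
    Ncnt m τ t t ≤ t := by
  set B : Finset (Fin m) := univ.filter (fun k : Fin m => (τ.symm k : ℕ) ≤ t) with hB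
  have hBcard : B.card = t + 1 := cardS τ t (by omega)
  have h1 : Ncnt m τ t t = (univ.filter (fun k : Fin m => k ∈ B ∧ k + 1 ∈ B)).card := by
    rw [Ncnt]; congr 1; apply Finset.filter_congr; intro k _; simp [hB]
  have h2 := cyc_bound B (by rw [← Finset.card_pos, hBcard]; omega)
    (by intro h; rw [h, Finset.card_univ, Fintype.card_fin] at hBcard; omega)
  omega

lemma Nadj (τ : Equiv.Perm (Fin m)) (t : ℕ) (ht1 : 1 ≤ t) (ht : t + 2 ≤ m) :
    Ncnt m τ (t-1) t + Ncnt m τ t (t-1) ≤ 2*t - 1 := by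
  have htm : t < m := by omega
  set T : Finset (Fin m) := univ.filter (fun k : Fin m => (τ.symm k : ℕ) ≤ t) with hT
  have hTcard : T.card = t + 1 := cardS τ t htm
  set w : Fin m := τ ⟨t, htm⟩ with hw
  have hsymw : τ.symm w = ⟨t, htm⟩ := τ.symm_apply_apply _
  -- characterization: σ.symm k ≤ t-1 ↔ (σ.symm k ≤ t ∧ k ≠ w)
  have hchar : ∀ k : Fin m, ((τ.symm k : ℕ) ≤ t - 1 ↔ ((τ.symm k : ℕ) ≤ t ∧ k ≠ w)) := by
    intro k
    constructor
    · intro h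
      refine ⟨by omega, ?_⟩
      rintro rfl
      rw [hsymw] at h
      simp at h; omega
    · rintro ⟨h1, h2⟩
      rcases Nat.lt_or_ge (τ.symm k : ℕ) t with h | h
      · omega
      · exfalso; apply h2
        have : τ.symm k = ⟨t, htm⟩ := by apply Fin.ext; simp; omega
        have := congrArg τ this
        rwa [τ.apply_symm_apply] at this
  set A : Finset (Fin m) := univ.filter
    (fun k : Fin m => ((τ.symm k : ℕ) ≤ t ∧ ((τ.symm (k+1) : ℕ)) ≤ t)) with hA
  have hAcard : A.card = Ncnt m τ t t := rfl
  have hAle : A.card ≤ t := Ndiag τ t (by omega)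
  have hE1 : Ncnt m τ (t-1) t = (A.erase w).card := by
    rw [Ncnt]; congr 1
    ext k
    simp only [mem_filter, mem_univ, true_and, Finset.mem_erase, hA]
    rw [hchar k]
    tauto
  have hE2 : Ncnt m τ t (t-1) = (A.erase (w-1)).card := by
    rw [Ncnt]; congr 1
    ext k
    simp only [mem_filter, mem_univ, true_and, Finset.mem_erase, hA]
    rw [hchar (k+1)]
    constructor
    · rintro ⟨h1, h2, h3⟩
      refine ⟨?_, h1, h2⟩
      intro hk; apply h3; rw [hk]; abel
    · rintro ⟨h3, h1, h2⟩
      refine ⟨h1, h2, ?_⟩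
      intro hk; apply h3
      rw [← hk]; abel
  by_cases hw1 : (τ.symm (w+1) : ℕ) ≤ t
  · -- w ∈ A
    have hwA : w ∈ A := by
      simp only [hA, mem_filter, mem_univ, true_and]
      exact ⟨by rw [hsymw], hw1⟩
    have := Finset.card_erase_of_mem hwA
    have h2 : (A.erase (w-1)).card ≤ A.card := Finset.card_erase_le
    omega
  · by_cases hw2 : (τ.symm (w-1) : ℕ) ≤ t
    · have hwA : w - 1 ∈ A := by
        simp only [hA, mem_filter, mem_univ, true_and]
        refine ⟨hw2, ?_⟩
        have : w - 1 + 1 = w := by abel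
        rw [this, hsymw]
      have := Finset.card_erase_of_mem hwA
      have h2 : (A.erase w).card ≤ A.card := Finset.card_erase_le
      omega
    · -- both neighbours of w outside T : A lives in T.erase w
      have hwT : w ∈ T := by simp [hT, hsymw]
      have hBcard : (T.erase w).card = t := by
        rw [Finset.card_erase_of_mem hwT, hTcard]
        omega
      have hAeq : A = univ.filter (fun k : Fin m => k ∈ T.erase w ∧ k + 1 ∈ T.erase w) := by
        ext k
        simp only [hA, mem_filter, mem_univ, true_and, Finset.mem_erase, hT]
        constructor
        · rintro ⟨h1, h2⟩
          refine ⟨⟨?_, h1⟩, ?_, h2⟩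
          · rintro rfl; exact hw1 h2
          · intro hk
            apply hw2
            have : k = w - 1 := by rw [← hk]; abel
            rwa [this] at h1
        · tauto
      have hne : (T.erase w).Nonempty := by
        rw [← Finset.card_pos, hBcard]; omega
      have hnu : T.erase w ≠ univ := by
        intro h
        have h2 := hBcard
        rw [h, Finset.card_univ, Fintype.card_fin] at h2; omega
      have hle : A.card ≤ t - 1 := by
        rw [hAeq]
        have := cyc_bound (T.erase w) hne hnu
        omega
      have h2 : (A.erase w).card ≤ A.card := Finset.card_erase_le
      have h3 : (A.erase (w-1)).card ≤ A.card := Finset.card_erase_le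
      omega


section Greedy
variable {g : Equiv.Perm (Fin m)}

lemma idx_eq (hm : 2 ≤ m) (hg : IsGreedy g) (r : ℕ) (hr : r < m) :
    ((g.symm ⟨r, hr⟩ : ℕ)) = if 2*r < m then 2*r else 2*(m-1-r)+1 := by
  rcases Nat.lt_or_ge (2*r+1) m with h1 | h1
  · -- r < m/2
    rw [if_pos (by omega)]
    exact (hg ⟨r, hr⟩).1 (by simp; omega)
  · rcases Nat.lt_or_ge (2*r) m with h2 | h2
    · -- middle: m = 2r+1
      have hmid : m = 2*r + 1 := by omega
      rw [if_pos h2]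
      by_contra hne
      set v : ℕ := (g.symm ⟨r, hr⟩ : ℕ) with hv
      have hvlt : v < m := (g.symm ⟨r, hr⟩).isLt
      have hvle : v ≤ 2*r - 1 := by omega
      rcases Nat.even_or_odd v with ⟨c, hc⟩ | ⟨c, hc⟩
      · have hclt : c < m := by omega
        have h3 : ((g.symm ⟨c, hclt⟩ : ℕ)) = 2*c := (hg ⟨c, hclt⟩).1 (by simp; omega)
        have h4 : g.symm ⟨c, hclt⟩ = g.symm ⟨r, hr⟩ := by
          apply Fin.ext; omega
        have := g.symm.injective h4
        simp only [Fin.mk.injEq] at this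
        omega
      · have hclt : m - 1 - c < m := by omega
        have h3 : ((g.symm ⟨m-1-c, hclt⟩ : ℕ)) = 2*(m-1-(m-1-c))+1 :=
          (hg ⟨m-1-c, hclt⟩).2 (by simp; omega)
        have h4 : g.symm ⟨m-1-c, hclt⟩ = g.symm ⟨r, hr⟩ := by
          apply Fin.ext; simp only [h3, hv]; omega
        have := g.symm.injective h4
        simp only [Fin.mk.injEq] at this
        omega
    · rw [if_neg (by omega)]
      exact (hg ⟨r, hr⟩).2 (by simp; omega)

lemma card_arc (e c : ℕ) (hec : e ≤ c) (hcm : c ≤ m) :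
    (univ.filter (fun k : Fin m => (k : ℕ) < e ∨ c ≤ (k : ℕ))).card = e + (m - c) := by
  rw [Finset.card_filter]
  rw [Fin.sum_univ_eq_sum_range (fun x => if x < e ∨ c ≤ x then 1 else 0) m]
  rw [← Finset.card_filter]
  have : (range m).filter (fun x => x < e ∨ c ≤ x) = range e ∪ Ico c m := by
    ext x
    simp only [Finset.mem_filter, Finset.mem_range, Finset.mem_union, Finset.mem_Ico]
    omega
  rw [this, Finset.card_union_of_disjoint, Finset.card_range, Nat.card_Ico]
  rw [Finset.disjoint_left]
  intro x hx hx'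
  simp only [Finset.mem_range, Finset.mem_Ico] at hx hx'
  omega

/-- value of `g.symm` at a point, via its `val`. -/
lemma idxv (hm : 2 ≤ m) (hg : IsGreedy g) (k : Fin m) :
    ((g.symm k : ℕ)) = if 2*(k:ℕ) < m then 2*(k:ℕ) else 2*(m-1-(k:ℕ))+1 := by
  have := idx_eq hm hg (k:ℕ) k.isLt
  rwa [Fin.eta] at this



lemma Wa (hm : 2 ≤ m) (hg : IsGreedy g) (s t ea : ℕ) (hst : s ≤ t) (ht : t + 2 ≤ m)
    (hea : ea ≤ s/2 + 1) (hkey : 2*ea ≤ t) :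
    ea + (s+1)/2 ≤ Ncnt m g s t := by
  have hsub : (univ.filter (fun k : Fin m => (k : ℕ) < ea ∨ m - (s+1)/2 ≤ (k : ℕ)))
      ⊆ (univ.filter
        (fun k : Fin m => ((g.symm k : ℕ) ≤ s ∧ ((g.symm (k+1) : ℕ)) ≤ t))) := by
    intro k hk
    simp only [mem_filter, mem_univ, true_and] at hk ⊢
    have hklt : (k:ℕ) < m := k.isLt
    have h1 := idxv hm hg k
    have h2 := idxv hm hg (k+1)
    have hsv := succ_val hm k
    rcases hk with hkl | hkr
    · -- even side: k < ea, so k+1 ≤ s/2+1, no wraparound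
      have hkm : (k:ℕ) < m - 1 := by omega
      rw [hsv] at h2
      rw [Nat.mod_eq_of_lt (by omega)] at h2
      constructor
      · rw [h1]; split_ifs <;> omega
      · rw [h2]; split_ifs <;> omega
    · rcases Nat.lt_or_ge (k:ℕ) (m-1) with hkm | hkm
      · rw [hsv, Nat.mod_eq_of_lt (by omega)] at h2
        constructor
        · rw [h1]; split_ifs <;> omega
        · rw [h2]; split_ifs <;> omega
      · have hke : (k:ℕ) = m - 1 := by omega
        rw [hsv, hke] at h2
        rw [Nat.sub_add_cancel (by omega), Nat.mod_self] at h2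
        constructor
        · rw [h1]; split_ifs <;> omega
        · rw [h2]; split_ifs <;> omega
  have hcard := card_arc (m := m) ea (m - (s+1)/2) (by omega) (by omega)
  have hle := Finset.card_le_card hsub
  rw [hcard] at hle
  have : m - (m - (s+1)/2) = (s+1)/2 := by omega
  rw [this] at hle
  exact hle

lemma Wb (hm : 2 ≤ m) (hg : IsGreedy g) (s t cb : ℕ) (hst : s ≤ t) (ht1 : 1 ≤ t)
    (ht : t + 2 ≤ m) (hcb3 : m ≤ 2*cb) (hcb2 : cb ≤ m-1)
    (hkey : 2*m ≤ 2*cb + t + 1) (hsucc : 2*m + 1 ≤ 2*cb + s + 4) :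
    s/2 + (m - cb) ≤ Ncnt m g t s := by
  have hsub : (univ.filter (fun k : Fin m => (k : ℕ) < s/2 ∨ cb ≤ (k : ℕ)))
      ⊆ (univ.filter
        (fun k : Fin m => ((g.symm k : ℕ) ≤ t ∧ ((g.symm (k+1) : ℕ)) ≤ s))) := by
    intro k hk
    simp only [mem_filter, mem_univ, true_and] at hk ⊢
    have hklt : (k:ℕ) < m := k.isLt
    have h1 := idxv hm hg k
    have h2 := idxv hm hg (k+1)
    have hsv := succ_val hm k
    rcases hk with hkl | hkr
    · have hkm : (k:ℕ) < m - 1 := by omega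
      rw [hsv, Nat.mod_eq_of_lt (by omega)] at h2
      constructor
      · rw [h1]; split_ifs <;> omega
      · rw [h2]; split_ifs <;> omega
    · rcases Nat.lt_or_ge (k:ℕ) (m-1) with hkm | hkm
      · rw [hsv, Nat.mod_eq_of_lt (by omega)] at h2
        constructor
        · rw [h1]; split_ifs <;> omega
        · rw [h2]; split_ifs <;> omega
      · have hke : (k:ℕ) = m - 1 := by omega
        rw [hsv, hke] at h2
        rw [Nat.sub_add_cancel (by omega), Nat.mod_self] at h2
        constructor
        · rw [h1]; split_ifs <;> omega
        · rw [h2]; split_ifs <;> omega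
  have hcard := card_arc (m := m) (s/2) cb (by omega) (by omega)
  have hle := Finset.card_le_card hsub
  rw [hcard] at hle
  exact hle

lemma Nglow_a (hm : 2 ≤ m) (hg : IsGreedy g) (s t : ℕ) (hst : s ≤ t) (ht : t + 2 ≤ m) :
    s + 1 ≤ Ncnt m g s t + (if s/2 = t/2 then 1 else 0) := by
  rcases eq_or_ne (s/2) (t/2) with hδ | hδ
  · rw [if_pos hδ]
    have := Wa hm hg s t (s/2) hst ht (by omega) (by omega)
    omega
  · rw [if_neg hδ]
    have hlt : s/2 < t/2 := by
      rcases Nat.lt_or_ge (s/2) (t/2) with h | h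
      · exact h
      · exfalso; apply hδ; omega
    have := Wa hm hg s t (s/2 + 1) hst ht (by omega) (by omega)
    omega

lemma Nglow_b (hm : 2 ≤ m) (hg : IsGreedy g) (s t : ℕ) (hst : s ≤ t) (ht1 : 1 ≤ t)
    (ht : t + 2 ≤ m) :
    s + 1 ≤ Ncnt m g t s + (if (s+1)/2 = (t+1)/2 then 1 else 0) := by
  rcases eq_or_ne ((s+1)/2) ((t+1)/2) with hδ | hδ
  · rw [if_pos hδ]
    have hs1 : 1 ≤ s := by omega
    have := Wb hm hg s t (m - (s+1)/2) hst ht1 ht (by omega) (by omega) (by omega) (by omega)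
    omega
  · rw [if_neg hδ]
    have hlt : (s+1)/2 < (t+1)/2 := by
      rcases Nat.lt_or_ge ((s+1)/2) ((t+1)/2) with h | h
      · exact h
      · exfalso; apply hδ; omega
    have := Wb hm hg s t (m - (s+1)/2 - 1) hst ht1 ht (by omega) (by omega) (by omega) (by omega)
    omega

lemma Mmain_le (hm : 2 ≤ m) (hg : IsGreedy g) (σ : Equiv.Perm (Fin m)) (s t : ℕ)
    (hst : s ≤ t) (ht : t < m) :
    Ncnt m σ s t + Ncnt m σ t s ≤ Ncnt m g s t + Ncnt m g t s := by
  have hs : s < m := by omega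
  rcases Nat.lt_or_ge t (m-1) with htm | htm
  · -- t ≤ m - 2
    have ht2 : t + 2 ≤ m := by omega
    rcases Nat.lt_or_ge (s+1) t with hcase | hcase
    · -- s + 2 ≤ t : both bounds are s+1
      have h1 := Nle₁ σ s t hs
      have h2 := Nle₂ σ s t hs
      have g1 := Nglow_a hm hg s t hst ht2
      have g2 := Nglow_b hm hg s t hst (by omega) ht2
      have hd1 : s/2 ≠ t/2 := by omega
      have hd2 : (s+1)/2 ≠ (t+1)/2 := by omega
      rw [if_neg hd1] at g1
      rw [if_neg hd2] at g2
      omega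
    · rcases Nat.lt_or_ge s t with hcase2 | hcase2
      · -- t = s + 1
        have hts : t = s + 1 := by omega
        have h1 := Nadj σ t (by omega) ht2
        rw [show t - 1 = s by omega] at h1
        have g1 := Nglow_a hm hg s t hst ht2
        have g2 := Nglow_b hm hg s t hst (by omega) ht2
        -- exactly one of the two indicators is 1
        have hpar : (if s/2 = t/2 then 1 else 0) + (if (s+1)/2 = (t+1)/2 then 1 else 0) = 1 := by
          rcases Nat.even_or_odd s with ⟨c, hc⟩ | ⟨c, hc⟩
          · rw [if_pos (by omega), if_neg (by omega)]
          · rw [if_neg (by omega), if_pos (by omega)]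
        omega
      · -- s = t
        have hts : s = t := by omega
        subst hts
        have h1 := Ndiag σ s (by omega)
        have g1 := Nglow_a hm hg s s le_rfl ht2
        rw [if_pos rfl] at g1
        omega
  · -- t = m - 1
    have hte : t = m - 1 := by omega
    subst hte
    have h1 := Ntop σ s hs
    have h2 := Ntop g s hs
    omega

lemma Mmain (hm : 2 ≤ m) (hg : IsGreedy g) (σ : Equiv.Perm (Fin m)) (s t : ℕ)
    (hs : s < m) (ht : t < m) :
    Ncnt m σ s t + Ncnt m σ t s ≤ Ncnt m g s t + Ncnt m g t s := by
  rcases le_total s t with h | h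
  · exact Mmain_le hm hg σ s t h ht
  · have := Mmain_le hm hg σ t s h hs
    omega

end Greedy

lemma cyclicP_two (hm : 2 ≤ m) (σ : Equiv.Perm (Fin m)) (a : Fin m → ℝ) :
    cyclicP m 2 σ a = ∑ k : Fin m, a (σ.symm k) * a (σ.symm (k+1)) := by
  unfold cyclicP
  apply Finset.sum_congr rfl
  intro k _
  rw [Finset.prod_range_succ, Finset.prod_range_one]
  have h0 : (⟨((k:ℕ) + 0) % m, Nat.mod_lt _ k.pos⟩ : Fin m) = k := by
    apply Fin.ext
    simp [Nat.mod_eq_of_lt k.isLt]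
  have h1 : (⟨((k:ℕ) + 1) % m, Nat.mod_lt _ k.pos⟩ : Fin m) = k + 1 := by
    apply Fin.ext
    simp [succ_val hm k]
  rw [h0, h1]

noncomputable def dgap (m : ℕ) (a : Fin m → ℝ) (s : ℕ) : ℝ :=
  (if h : s < m then a ⟨s, h⟩ else 0) - (if h : s + 1 < m then a ⟨s+1, h⟩ else 0)

lemma dgap_nonneg (a : Fin m → ℝ) (ha : ∀ i, 0 < a i) (hdec : Antitone a) (s : ℕ) :
    0 ≤ dgap m a s := by
  unfold dgap
  split_ifs with h1 h2 h2
  · have : (⟨s, h1⟩ : Fin m) ≤ ⟨s+1, h2⟩ := by simp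
    have := hdec this
    linarith
  · have := (ha ⟨s, h1⟩).le
    linarith
  · omega
  · simp

lemma decomp (a : Fin m → ℝ) (p : Fin m) :
    a p = ∑ s ∈ range m, if (p:ℕ) ≤ s then dgap m a s else 0 := by
  rw [Finset.sum_ite, Finset.sum_const_zero, add_zero]
  have hfil : (range m).filter (fun s => (p:ℕ) ≤ s) = Finset.Ico (p:ℕ) m := by
    ext x
    simp only [Finset.mem_filter, Finset.mem_range, Finset.mem_Ico]
    have := p.isLt
    omega
  rw [hfil]
  rw [Finset.sum_Ico_eq_sum_range]
  set f : ℕ → ℝ := fun s => if h : s < m then a ⟨s, h⟩ else 0 with hf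
  have hdg : ∀ i, dgap m a ((p:ℕ) + i) = f ((p:ℕ) + i) - f ((p:ℕ) + (i+1)) := by
    intro i
    unfold dgap
    rw [hf]
    simp [add_assoc]
  calc a p = f ((p:ℕ) + 0) - f ((p:ℕ) + (m - (p:ℕ))) := by
        have h1 : f ((p:ℕ) + 0) = a p := by
          rw [hf]; simp [dif_pos p.isLt]
        have h2 : f ((p:ℕ) + (m - (p:ℕ))) = 0 := by
          rw [hf]
          have : (p:ℕ) + (m - (p:ℕ)) = m := by have := p.isLt; omega
          rw [this]
          simp
        rw [h1, h2, sub_zero]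
    _ = ∑ i ∈ range (m - (p:ℕ)), (f ((p:ℕ) + i) - f ((p:ℕ) + (i+1))) := by
        rw [Finset.sum_range_sub' (fun i => f ((p:ℕ) + i))]
    _ = ∑ i ∈ range (m - (p:ℕ)), dgap m a ((p:ℕ) + i) := by
        apply Finset.sum_congr rfl
        intro i _
        rw [hdg i]

lemma expand (σ : Equiv.Perm (Fin m)) (a : Fin m → ℝ) :
    ∑ k : Fin m, a (σ.symm k) * a (σ.symm (k+1))
      = ∑ s ∈ range m, ∑ t ∈ range m, dgap m a s * dgap m a t * (Ncnt m σ s t : ℝ) := by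
  calc ∑ k : Fin m, a (σ.symm k) * a (σ.symm (k+1))
      = ∑ k : Fin m, ∑ s ∈ range m, ∑ t ∈ range m,
          (if ((σ.symm k : ℕ)) ≤ s then dgap m a s else 0) *
          (if ((σ.symm (k+1) : ℕ)) ≤ t then dgap m a t else 0) := by
        apply Finset.sum_congr rfl
        intro k _
        rw [decomp a (σ.symm k), decomp a (σ.symm (k+1)), Finset.sum_mul_sum]
    _ = ∑ s ∈ range m, ∑ t ∈ range m, ∑ k : Fin m,
          (if ((σ.symm k : ℕ)) ≤ s then dgap m a s else 0) *
          (if ((σ.symm (k+1) : ℕ)) ≤ t then dgap m a t else 0) := by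
        rw [Finset.sum_comm]
        apply Finset.sum_congr rfl
        intro s _
        rw [Finset.sum_comm]
    _ = ∑ s ∈ range m, ∑ t ∈ range m, dgap m a s * dgap m a t * (Ncnt m σ s t : ℝ) := by
        apply Finset.sum_congr rfl; intro s _
        apply Finset.sum_congr rfl; intro t _
        have hsplit : ∀ k : Fin m,
            (if ((σ.symm k : ℕ)) ≤ s then dgap m a s else 0) *
            (if ((σ.symm (k+1) : ℕ)) ≤ t then dgap m a t else 0)
            = if (((σ.symm k : ℕ)) ≤ s ∧ ((σ.symm (k+1) : ℕ)) ≤ t)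
              then dgap m a s * dgap m a t else 0 := by
          intro k
          split_ifs <;> simp_all
        rw [Finset.sum_congr rfl (fun k _ => hsplit k)]
        rw [Finset.sum_ite, Finset.sum_const, Finset.sum_const_zero, add_zero, nsmul_eq_mul]
        rw [Ncnt]
        ring

lemma final_step (a : Fin m → ℝ) (hd : ∀ s, 0 ≤ dgap m a s)
    (σ g : Equiv.Perm (Fin m))
    (hM : ∀ s t, s < m → t < m →
      Ncnt m σ s t + Ncnt m σ t s ≤ Ncnt m g s t + Ncnt m g t s) :
    ∑ s ∈ range m, ∑ t ∈ range m, dgap m a s * dgap m a t * (Ncnt m σ s t : ℝ)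
      ≤ ∑ s ∈ range m, ∑ t ∈ range m, dgap m a s * dgap m a t * (Ncnt m g s t : ℝ) := by
  have hswap : ∀ τ : Equiv.Perm (Fin m),
      (∑ s ∈ range m, ∑ t ∈ range m, dgap m a s * dgap m a t * (Ncnt m τ t s : ℝ))
      = ∑ s ∈ range m, ∑ t ∈ range m, dgap m a s * dgap m a t * (Ncnt m τ s t : ℝ) := by
    intro τ
    rw [Finset.sum_comm]
    apply Finset.sum_congr rfl; intro s _
    apply Finset.sum_congr rfl; intro t _
    ring
  have hdouble : ∀ τ : Equiv.Perm (Fin m),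
      (∑ s ∈ range m, ∑ t ∈ range m, dgap m a s * dgap m a t * (Ncnt m τ s t : ℝ))
        + (∑ s ∈ range m, ∑ t ∈ range m, dgap m a s * dgap m a t * (Ncnt m τ s t : ℝ))
      = ∑ s ∈ range m, ∑ t ∈ range m,
          dgap m a s * dgap m a t * (((Ncnt m τ s t : ℝ)) + (Ncnt m τ t s : ℝ)) := by
    intro τ
    nth_rewrite 1 [← hswap τ]
    rw [← Finset.sum_add_distrib]
    apply Finset.sum_congr rfl; intro s _
    rw [← Finset.sum_add_distrib]
    apply Finset.sum_congr rfl; intro t _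
    ring
  have hmain : ∑ s ∈ range m, ∑ t ∈ range m,
          dgap m a s * dgap m a t * (((Ncnt m σ s t : ℝ)) + (Ncnt m σ t s : ℝ))
      ≤ ∑ s ∈ range m, ∑ t ∈ range m,
          dgap m a s * dgap m a t * (((Ncnt m g s t : ℝ)) + (Ncnt m g t s : ℝ)) := by
    apply Finset.sum_le_sum
    intro s hs
    apply Finset.sum_le_sum
    intro t ht
    simp only [Finset.mem_range] at hs ht
    apply mul_le_mul_of_nonneg_left _ (mul_nonneg (hd s) (hd t))
    have := hM s t hs ht
    push_cast
    exact_mod_cast by exact_mod_cast Nat.cast_le.mpr this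
  have h1 := hdouble σ
  have h2 := hdouble g
  linarith

end Stmt3Aux

/-- The greedy permutation maximises the sum of products of cyclically adjacent pairs. -/
theorem stmt_3 (m : ℕ) (hm : 2 ≤ m) (a : Fin m → ℝ) (ha : ∀ i, 0 < a i)
    (hdec : Antitone a) (g : Equiv.Perm (Fin m)) (hg : IsGreedy g)
    (σ : Equiv.Perm (Fin m)) :
    cyclicP m 2 σ a ≤ cyclicP m 2 g a := by
  haveI : NeZero m := ⟨by omega⟩
  rw [Stmt3Aux.cyclicP_two hm σ a, Stmt3Aux.cyclicP_two hm g a,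
      Stmt3Aux.expand σ a, Stmt3Aux.expand g a]
  exact Stmt3Aux.final_step a (Stmt3Aux.dgap_nonneg a ha hdec) σ g
    (fun s t hs ht => Stmt3Aux.Mmain hm hg σ s t hs ht)
end

section
/- Let a_0 ≥ a_1 ≥ ... ≥ a_{m-1} > 0. The greedy (circular symmetric) permutation maximises the sum of products of triples of cyclically consecutive entries: for every permutation σ of {0,...,m-1}, P_3(σ_greedy; a) ≥ P_3(σ; a), where P_3(σ; a) = ∑_{k=0}^{m-1} a_{σ⁻¹(k)} a_{σ⁻¹(k+1)} a_{σ⁻¹(k+2)} (indices mod m). -/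
open Finset
open scoped Fin.NatCast Fin.CommRing

namespace CyclicAux

variable {m : ℕ} [NeZero m]

lemma val1 (h : 3 ≤ m) : ((1 : Fin m)).val = 1 := by
  rw [Fin.val_one']; exact Nat.mod_eq_of_lt (by omega)

lemma val2 (h : 3 ≤ m) : ((2 : Fin m)).val = 2 := by
  have h2 : (2 : Fin m) = (1:Fin m) + 1 := by norm_num
  rw [h2, Fin.val_add, val1 h]; exact Nat.mod_eq_of_lt (by omega)

lemma subval (a b : Fin m) :
    (a - b).val = if b.val ≤ a.val then a.val - b.val else a.val + m - b.val := by
  have ha := a.is_lt; have hb := b.is_lt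
  rw [Fin.sub_def]
  simp only
  split
  · next hle =>
    have h1 : m - b.val + a.val = m + (a.val - b.val) := by omega
    rw [h1, Nat.add_mod_left]
    exact Nat.mod_eq_of_lt (by omega)
  · next hlt =>
    rw [Nat.mod_eq_of_lt (by omega)]
    omega

lemma addval (a b : Fin m) :
    (a + b).val = if a.val + b.val < m then a.val + b.val else a.val + b.val - m := by
  have ha := a.is_lt; have hb := b.is_lt
  rw [Fin.val_add]
  split
  · exact Nat.mod_eq_of_lt (by omega)
  · next h =>
    have h1 : a.val + b.val = m + (a.val + b.val - m) := by omega
    have h2 : a.val + b.val - m < m := by omega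
    conv_lhs => rw [h1, Nat.add_mod_left]
    exact Nat.mod_eq_of_lt h2

lemma exists_insert_of_card (s t : Finset (Fin m)) (hsub : s ⊆ t) (hc : t.card = s.card + 1) :
    ∃ x, x ∉ s ∧ t = insert x s := by
  have h1 : (t \ s).card = 1 := by rw [Finset.card_sdiff_of_subset hsub]; omega
  obtain ⟨x, hx⟩ := Finset.card_eq_one.mp h1
  have hxts : x ∈ t \ s := hx ▸ Finset.mem_singleton_self x
  have hxt := (Finset.mem_sdiff.mp hxts).1
  have hxs := (Finset.mem_sdiff.mp hxts).2
  exact ⟨x, hxs, (Finset.eq_of_subset_of_card_le (Finset.insert_subset hxt hsub)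
    (by rw [Finset.card_insert_of_notMem hxs]; omega)).symm⟩

/-- window at position `k` -/
def W (k : Fin m) : Finset (Fin m) := {k, k + 1, k + 2}

/-- windows containing position `v` -/
def Wins (v : Fin m) : Finset (Fin m) := {v, v - 1, v - 2}

lemma mem_W_iff (hm : 3 ≤ m) (v k : Fin m) : v ∈ W k ↔ k ∈ Wins v := by
  simp only [W, Wins, Finset.mem_insert, Finset.mem_singleton]
  constructor
  · rintro (h | h | h)
    · exact Or.inl h.symm
    · exact Or.inr (Or.inl (by rw [h]; ring))
    · exact Or.inr (Or.inr (by rw [h]; ring))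
  · rintro (h | h | h)
    · exact Or.inl h.symm
    · exact Or.inr (Or.inl (by rw [h]; ring))
    · exact Or.inr (Or.inr (by rw [h]; ring))

lemma card_W (hm : 3 ≤ m) (k : Fin m) : (W k).card = 3 := by
  have h1 := val1 (m := m) hm; have h2 := val2 (m := m) hm
  have e1 : (k + 1).val = if k.val + 1 < m then k.val + 1 else k.val + 1 - m := by
    rw [addval, h1]
  have e2 : (k + 2).val = if k.val + 2 < m then k.val + 2 else k.val + 2 - m := by
    rw [addval, h2]
  have hk := k.is_lt
  have d1 : k ≠ k + 1 := by
    intro h; apply_fun Fin.val at h; rw [e1] at h; split at h <;> omega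
  have d2 : k ≠ k + 2 := by
    intro h; apply_fun Fin.val at h; rw [e2] at h; split at h <;> omega
  have d3 : k + 1 ≠ k + 2 := by
    intro h; apply_fun Fin.val at h; rw [e1, e2] at h
    split at h <;> split at h <;> omega
  rw [W, Finset.card_insert_of_notMem (by simp [d1, d2]),
      Finset.card_insert_of_notMem (by simp [d3]), Finset.card_singleton]

lemma card_Wins (hm : 3 ≤ m) (v : Fin m) : (Wins v).card = 3 := by
  have h1 := val1 (m := m) hm; have h2 := val2 (m := m) hm
  have e1 : (v - 1).val = if 1 ≤ v.val then v.val - 1 else v.val + m - 1 := by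
    rw [subval, h1]
  have e2 : (v - 2).val = if 2 ≤ v.val then v.val - 2 else v.val + m - 2 := by
    rw [subval, h2]
  have hv := v.is_lt
  have d1 : v ≠ v - 1 := by
    intro h; apply_fun Fin.val at h; rw [e1] at h; split at h <;> omega
  have d2 : v ≠ v - 2 := by
    intro h; apply_fun Fin.val at h; rw [e2] at h; split at h <;> omega
  have d3 : v - 1 ≠ v - 2 := by
    intro h; apply_fun Fin.val at h; rw [e1, e2] at h
    split at h <;> split at h <;> omega
  rw [Wins, Finset.card_insert_of_notMem (by simp [d1, d2]),
      Finset.card_insert_of_notMem (by simp [d3]), Finset.card_singleton]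

lemma card_W_le (k : Fin m) : (W k).card ≤ 3 := by
  refine le_trans (Finset.card_insert_le _ _) ?_
  exact Nat.succ_le_succ (le_trans (Finset.card_insert_le _ _)
    (by simp))

lemma card_Wins_le (v : Fin m) : (Wins v).card ≤ 3 := by
  refine le_trans (Finset.card_insert_le _ _) ?_
  exact Nat.succ_le_succ (le_trans (Finset.card_insert_le _ _)
    (by simp))

/-- closure under +1 implies univ -/
lemma closure_add_one (K : Finset (Fin m)) (hne : K.Nonempty) (hcl : ∀ k ∈ K, k + 1 ∈ K) :
    K = Finset.univ := by
  obtain ⟨k0, hk0⟩ := hne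
  have hstep : ∀ n : ℕ, k0 + (n : Fin m) ∈ K := by
    intro n
    induction n with
    | zero => simpa using hk0
    | succ n ih =>
      have : ((n + 1 : ℕ) : Fin m) = (n : Fin m) + 1 := by push_cast; ring
      rw [this, ← add_assoc]
      exact hcl _ ih
  apply Finset.eq_univ_of_forall
  intro z
  have : k0 + ((z - k0).val : Fin m) = z := by
    rw [Fin.cast_val_eq_self]; ring
  rw [← this]; exact hstep _

lemma closure_sub_one (K : Finset (Fin m)) (hne : K.Nonempty) (hcl : ∀ k ∈ K, k - 1 ∈ K) :
    K = Finset.univ := by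
  obtain ⟨k0, hk0⟩ := hne
  have hstep : ∀ n : ℕ, k0 - (n : Fin m) ∈ K := by
    intro n
    induction n with
    | zero => simpa using hk0
    | succ n ih =>
      have : ((n + 1 : ℕ) : Fin m) = (n : Fin m) + 1 := by push_cast; ring
      rw [this]
      have : k0 - ((n : Fin m) + 1) = (k0 - (n : Fin m)) - 1 := by ring
      rw [this]
      exact hcl _ ih
  apply Finset.eq_univ_of_forall
  intro z
  have : k0 - ((k0 - z).val : Fin m) = z := by
    rw [Fin.cast_val_eq_self]; exact sub_sub_cancel k0 z
  rw [← this]; exact hstep _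

lemma grow_sub_one (K : Finset (Fin m)) (hne : K.Nonempty) (hKu : K ≠ Finset.univ) :
    K.card + 1 ≤ (K ∪ K.image (· - 1)).card := by
  by_contra hcon
  push_neg at hcon
  have hsub : K ⊆ K ∪ K.image (· - 1) := Finset.subset_union_left
  have hcard : (K ∪ K.image (· - 1)).card ≤ K.card := by omega
  have heq : K ∪ K.image (· - 1) = K := (Finset.eq_of_subset_of_card_le hsub hcard).symm
  apply hKu
  apply closure_sub_one K hne
  intro k hk
  have : k - 1 ∈ K ∪ K.image (· - 1) :=
    Finset.mem_union_right _ (Finset.mem_image_of_mem _ hk)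
  rwa [heq] at this

lemma grow_add_one (K : Finset (Fin m)) (hne : K.Nonempty) (hKu : K ≠ Finset.univ) :
    K.card + 1 ≤ (K ∪ K.image (· + 1)).card := by
  by_contra hcon
  push_neg at hcon
  have hsub : K ⊆ K ∪ K.image (· + 1) := Finset.subset_union_left
  have hcard : (K ∪ K.image (· + 1)).card ≤ K.card := by omega
  have heq : K ∪ K.image (· + 1) = K := (Finset.eq_of_subset_of_card_le hsub hcard).symm
  apply hKu
  apply closure_add_one K hne
  intro k hk
  have : k + 1 ∈ K ∪ K.image (· + 1) :=
    Finset.mem_union_right _ (Finset.mem_image_of_mem _ hk)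
  rwa [heq] at this

lemma consec_filter_lt (U : Finset (Fin m)) (hne : U.Nonempty) (hU : U ≠ Finset.univ) :
    (U.filter (fun u => u + 1 ∈ U)).card < U.card := by
  have hsub : U.filter (fun u => u + 1 ∈ U) ⊆ U := Finset.filter_subset _ _
  rcases lt_or_eq_of_le (Finset.card_le_card hsub) with h | h
  · exact h
  · exfalso
    have heq : U.filter (fun u => u + 1 ∈ U) = U :=
      Finset.eq_of_subset_of_card_le hsub (le_of_eq h.symm)
    apply hU
    apply closure_add_one U hne
    intro u hu
    have hu2 : u ∈ U.filter (fun u => u + 1 ∈ U) := by rw [heq]; exact hu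
    exact (Finset.mem_filter.mp hu2).2

/-- number of windows fully inside U -/
lemma windows_in (hm : 3 ≤ m) (U : Finset (Fin m)) (hU : U ≠ Finset.univ) :
    (Finset.univ.filter (fun k => W k ⊆ U)).card + 2 ≤ U.card ∨
    (Finset.univ.filter (fun k => W (m := m) k ⊆ U)) = ∅ := by
  set K := Finset.univ.filter (fun k => W (m := m) k ⊆ U) with hK
  rcases K.eq_empty_or_nonempty with h | hne
  · exact Or.inr h
  left
  have hKU : K ≠ Finset.univ := by
    intro h
    apply hU
    apply Finset.eq_univ_of_forall
    intro v
    have hv : v ∈ K := h ▸ Finset.mem_univ v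
    have : W v ⊆ U := (Finset.mem_filter.mp hv).2
    exact this (by simp [W])
  have hWU : ∀ k ∈ K, k ∈ U ∧ k + 1 ∈ U ∧ k + 2 ∈ U := by
    intro k hk
    have h := (Finset.mem_filter.mp hk).2
    exact ⟨h (by simp [W]), h (by simp [W]), h (by simp [W])⟩
  set E := U.filter (fun u => u + 1 ∈ U) with hE
  have hsub : K ∪ K.image (· + 1) ⊆ E := by
    intro x hx
    rcases Finset.mem_union.mp hx with h | h
    · obtain ⟨h1, h2, _⟩ := hWU x h
      exact Finset.mem_filter.mpr ⟨h1, h2⟩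
    · obtain ⟨k, hk, rfl⟩ := Finset.mem_image.mp h
      obtain ⟨_, h2, h3⟩ := hWU k hk
      refine Finset.mem_filter.mpr ⟨h2, ?_⟩
      have : k + 1 + 1 = k + 2 := by
        have : (2 : Fin m) = 1 + 1 := by norm_num
        rw [this, ← add_assoc]
      rwa [this]
  have hUne : U.Nonempty := by
    obtain ⟨k, hk⟩ := hne
    exact ⟨k, (hWU k hk).1⟩
  have h1 : K.card + 1 ≤ (K ∪ K.image (· + 1)).card := grow_add_one K hne hKU
  have h2 : (K ∪ K.image (· + 1)).card ≤ E.card := Finset.card_le_card hsub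
  have h3 : E.card < U.card := consec_filter_lt U hUne hU
  omega

/-- incidence count between a set of windows `S` and a set of positions `U` -/
def Inc (S U : Finset (Fin m)) : ℕ := ∑ k ∈ S, (W k ∩ U).card

lemma Inc_comm (hm : 3 ≤ m) (S U : Finset (Fin m)) :
    Inc S U = ∑ v ∈ U, (S ∩ Wins v).card := by
  unfold Inc
  have h1 : ∀ k, (W (m := m) k ∩ U).card = ∑ v ∈ U, if v ∈ W k then 1 else 0 := by
    intro k
    rw [Finset.inter_comm, ← Finset.filter_mem_eq_inter, Finset.card_filter]
  have h2 : ∀ v, (S ∩ Wins (m := m) v).card = ∑ k ∈ S, if k ∈ Wins v then 1 else 0 := by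
    intro v
    rw [← Finset.filter_mem_eq_inter, Finset.card_filter]
  simp only [h1, h2]
  rw [Finset.sum_comm]
  apply Finset.sum_congr rfl
  intro v _
  apply Finset.sum_congr rfl
  intro k _
  simp only [mem_W_iff hm]

lemma Inc_le_S (S U : Finset (Fin m)) : Inc S U ≤ 3 * S.card := by
  unfold Inc
  calc ∑ k ∈ S, (W k ∩ U).card ≤ ∑ _k ∈ S, 3 := by
        apply Finset.sum_le_sum
        intro k _
        exact le_trans (Finset.card_le_card Finset.inter_subset_left) (card_W_le k)
    _ = 3 * S.card := by rw [Finset.sum_const, smul_eq_mul, mul_comm]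

lemma Inc_le_U (hm : 3 ≤ m) (S U : Finset (Fin m)) : Inc S U ≤ 3 * U.card := by
  rw [Inc_comm hm]
  calc ∑ v ∈ U, (S ∩ Wins v).card ≤ ∑ _v ∈ U, 3 := by
        apply Finset.sum_le_sum
        intro v _
        exact le_trans (Finset.card_le_card Finset.inter_subset_right) (card_Wins_le v)
    _ = 3 * U.card := by rw [Finset.sum_const, smul_eq_mul, mul_comm]

lemma Inc_le_mul (hm : 3 ≤ m) (S U : Finset (Fin m)) : Inc S U ≤ S.card * U.card := by
  rw [Inc_comm hm]
  calc ∑ v ∈ U, (S ∩ Wins v).card ≤ ∑ _v ∈ U, S.card := by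
        apply Finset.sum_le_sum
        intro v _
        exact Finset.card_le_card Finset.inter_subset_left
    _ = S.card * U.card := by rw [Finset.sum_const, smul_eq_mul, mul_comm]

lemma card_univ_fin : (Finset.univ : Finset (Fin m)).card = m := by
  simp

lemma mem_Wins_self (v : Fin m) : v ∈ Wins v := by simp [Wins]
lemma mem_Wins_sub_one (v : Fin m) : v - 1 ∈ Wins v := by simp [Wins]
lemma mem_Wins_sub_two (v : Fin m) : v - 2 ∈ Wins v := by simp [Wins]

/-- claim (a) -/
lemma claim_a (hm : 3 ≤ m) (S U : Finset (Fin m)) (hne : U.Nonempty)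
    (ht : S.card = U.card + 1) (htm : S.card + 1 ≤ m) :
    Inc S U + 1 ≤ 3 * U.card := by
  by_contra hcon
  push_neg at hcon
  have hIc : 3 * U.card ≤ Inc S U := by omega
  have hall : ∀ v ∈ U, Wins v ⊆ S := by
    by_contra h
    push_neg at h
    obtain ⟨v0, hv0U, hv0⟩ := h
    have hstrict : (S ∩ Wins v0).card < 3 := by
      rcases lt_or_eq_of_le (le_trans (Finset.card_le_card Finset.inter_subset_right)
        (card_Wins_le v0)) with h' | h'
      · exact h'
      · exfalso
        have : S ∩ Wins v0 = Wins v0 := by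
          apply Finset.eq_of_subset_of_card_le Finset.inter_subset_right
          rw [h', card_Wins hm]
        apply hv0
        intro x hx
        have hx2 : x ∈ S ∩ Wins v0 := by rw [this]; exact hx
        exact (Finset.mem_inter.mp hx2).1
    have hlt : Inc S U < 3 * U.card := by
      rw [Inc_comm hm]
      calc ∑ w ∈ U, (S ∩ Wins w).card < ∑ _w ∈ U, 3 := by
            apply Finset.sum_lt_sum
            · intro w _
              exact le_trans (Finset.card_le_card Finset.inter_subset_right) (card_Wins_le w)
            · exact ⟨v0, hv0U, hstrict⟩
        _ = 3 * U.card := by rw [Finset.sum_const, smul_eq_mul, mul_comm]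
    omega
  have hUuniv : U ≠ Finset.univ := by
    intro h
    have := card_univ_fin (m := m)
    rw [h] at ht
    omega
  set U1 := U ∪ U.image (· - 1) with hU1def
  have hU1S : U1 ⊆ S := by
    intro x hx
    rcases Finset.mem_union.mp hx with h | h
    · exact hall x h (mem_Wins_self x)
    · obtain ⟨v, hv, rfl⟩ := Finset.mem_image.mp h
      exact hall v hv (mem_Wins_sub_one v)
  by_cases hU1u : U1 = Finset.univ
  · have : S = Finset.univ := Finset.eq_univ_of_forall (fun z => hU1S (hU1u ▸ Finset.mem_univ z))
    rw [this, card_univ_fin] at htm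
    omega
  have hU1c : U.card + 1 ≤ U1.card := grow_sub_one U hne hUuniv
  set U2 := U1 ∪ U1.image (· - 1) with hU2def
  have hU2S : U2 ⊆ S := by
    intro x hx
    rcases Finset.mem_union.mp hx with h | h
    · exact hU1S h
    · obtain ⟨v, hv, rfl⟩ := Finset.mem_image.mp h
      rcases Finset.mem_union.mp hv with h' | h'
      · exact hall v h' (mem_Wins_sub_one v)
      · obtain ⟨w, hw, rfl⟩ := Finset.mem_image.mp h'
        have : w - 1 - 1 = w - 2 := by
          have h2 : (2 : Fin m) = 1 + 1 := by norm_num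
          rw [h2]; ring
        rw [this]
        exact hall w hw (mem_Wins_sub_two w)
  have hU1ne : U1.Nonempty := Finset.Nonempty.mono Finset.subset_union_left hne
  have hU2c : U1.card + 1 ≤ U2.card := grow_sub_one U1 hU1ne hU1u
  have : U2.card ≤ S.card := Finset.card_le_card hU2S
  omega

/-- claim (c) -/
lemma claim_c (hm : 3 ≤ m) (S U : Finset (Fin m)) (hne : S.Nonempty)
    (hU : U.card = S.card + 1) (hjm : U.card + 1 ≤ m) :
    Inc S U + 1 ≤ 3 * S.card := by
  by_contra hcon
  push_neg at hcon
  have hIc : 3 * S.card ≤ Inc S U := by omega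
  have hall : ∀ k ∈ S, W k ⊆ U := by
    by_contra h
    push_neg at h
    obtain ⟨k0, hk0S, hk0⟩ := h
    have hstrict : (W k0 ∩ U).card < 3 := by
      rcases lt_or_eq_of_le (le_trans (Finset.card_le_card Finset.inter_subset_left)
        (card_W_le k0)) with h' | h'
      · exact h'
      · exfalso
        have : W k0 ∩ U = W k0 := by
          apply Finset.eq_of_subset_of_card_le Finset.inter_subset_left
          rw [h', card_W hm]
        apply hk0
        intro x hx
        have hx2 : x ∈ W k0 ∩ U := by rw [this]; exact hx
        exact (Finset.mem_inter.mp hx2).2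
    have hlt : Inc S U < 3 * S.card := by
      unfold Inc
      calc ∑ k ∈ S, (W k ∩ U).card < ∑ _k ∈ S, 3 := by
            apply Finset.sum_lt_sum
            · intro k _
              exact le_trans (Finset.card_le_card Finset.inter_subset_left) (card_W_le k)
            · exact ⟨k0, hk0S, hstrict⟩
        _ = 3 * S.card := by rw [Finset.sum_const, smul_eq_mul, mul_comm]
    omega
  have hUuniv : U ≠ Finset.univ := by
    intro h
    rw [h, card_univ_fin] at hjm
    omega
  rcases windows_in hm U hUuniv with h | h
  · have hsub : S ⊆ Finset.univ.filter (fun k => W k ⊆ U) := by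
      intro k hk
      exact Finset.mem_filter.mpr ⟨Finset.mem_univ k, hall k hk⟩
    have := Finset.card_le_card hsub
    omega
  · obtain ⟨k0, hk0⟩ := hne
    have : k0 ∈ Finset.univ.filter (fun k => W k ⊆ U) :=
      Finset.mem_filter.mpr ⟨Finset.mem_univ k0, hall k0 hk0⟩
    rw [h] at this
    exact absurd this (Finset.notMem_empty k0)

/-- claim (b) -/
lemma claim_b (hm : 3 ≤ m) (S U : Finset (Fin m)) (ht1 : 1 ≤ S.card)
    (hj : U.card = S.card) (htm : S.card + 1 ≤ m) :
    Inc S U + 2 ≤ 3 * S.card := by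
  rcases eq_or_lt_of_le ht1 with h1 | h1
  · -- S.card = 1
    have := Inc_le_mul hm S U
    rw [hj, ← h1] at this
    omega
  -- S.card ≥ 2
  have hUuniv : U ≠ Finset.univ := by
    intro h
    rw [h, card_univ_fin] at hj
    omega
  set K := S.filter (fun k => W k ⊆ U) with hKdef
  have hKsub : K ⊆ Finset.univ.filter (fun k => W (m := m) k ⊆ U) := by
    intro k hk
    exact Finset.mem_filter.mpr ⟨Finset.mem_univ k, (Finset.mem_filter.mp hk).2⟩
  have hKcard : K.card ≤ S.card - 2 := by
    rcases windows_in hm U hUuniv with h | h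
    · have := Finset.card_le_card hKsub
      omega
    · have hKe : K = ∅ := Finset.subset_empty.mp (by rw [← h]; exact hKsub)
      rw [hKe]
      simp
  have hbound : Inc S U ≤ 2 * S.card + K.card := by
    unfold Inc
    calc ∑ k ∈ S, (W k ∩ U).card
        ≤ ∑ k ∈ S, (2 + if k ∈ K then 1 else 0) := by
          apply Finset.sum_le_sum
          intro k hk
          by_cases hkK : k ∈ K
          · simp only [hkK, if_true]
            exact le_trans (le_trans (Finset.card_le_card Finset.inter_subset_left) (card_W_le k)) (by omega)
          · simp only [hkK, if_false]
            have hnot : ¬ W k ⊆ U := by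
              intro hw
              exact hkK (Finset.mem_filter.mpr ⟨hk, hw⟩)
            have : (W k ∩ U).card < 3 := by
              rcases lt_or_eq_of_le (le_trans (Finset.card_le_card Finset.inter_subset_left)
                (card_W_le k)) with h' | h'
              · exact h'
              · exfalso
                have heq2 : W k ∩ U = W k := by
                  apply Finset.eq_of_subset_of_card_le Finset.inter_subset_left
                  rw [h', card_W hm]
                apply hnot
                intro x hx
                have hx2 : x ∈ W k ∩ U := by rw [heq2]; exact hx
                exact (Finset.mem_inter.mp hx2).2
            omega
      _ = 2 * S.card + K.card := by
          rw [Finset.sum_add_distrib, Finset.sum_const, smul_eq_mul, mul_comm]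
          congr 1
          rw [← Finset.card_filter]
          congr 1
          rw [Finset.filter_mem_eq_inter, Finset.inter_eq_right.mpr (Finset.filter_subset _ _)]
  omega

section Greedy

def omid : Fin m := ⟨(m / 2 - 1) % m, Nat.mod_lt _ (Nat.pos_of_ne_zero (NeZero.ne m))⟩

lemma omid_val (hm : 3 ≤ m) : (omid : Fin m).val = m / 2 - 1 := by
  unfold omid
  exact Nat.mod_eq_of_lt (by omega)

/-- the canonical nested family of greedy window sets -/
def St (m : ℕ) [NeZero m] (t : ℕ) : Finset (Fin m) :=
  if t = 0 then ∅
  else if t ≤ m - 2 then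
    Finset.univ.filter (fun k : Fin m => k.val + 2 ≤ (t+1)/2 ∨ m ≤ k.val + (t+2)/2)
  else if t = m - 1 then Finset.univ.erase omid
  else Finset.univ

lemma mem_St_iff (hm : 3 ≤ m) (t : ℕ) (k : Fin m) :
    k ∈ St m t ↔ (if t = 0 then False
      else if t ≤ m - 2 then (k.val + 2 ≤ (t+1)/2 ∨ m ≤ k.val + (t+2)/2)
      else if t = m - 1 then ¬ (k.val = m/2 - 1) else True) := by
  unfold St
  split_ifs with h0 h1 h2
  · simp
  · simp only [Finset.mem_filter, Finset.mem_univ, true_and]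
  · rw [Finset.mem_erase]
    simp only [Finset.mem_univ, and_true]
    constructor
    · intro h hv
      exact h (Fin.ext (by rw [hv, omid_val hm]))
    · intro h hk
      exact h (by rw [hk, omid_val hm])
  · simp

lemma card_filter_val (P : ℕ → Prop) [DecidablePred P] :
    (Finset.univ.filter (fun k : Fin m => P k.val)).card
      = ((Finset.range m).filter P).card := by
  apply Finset.card_bij (fun k _ => k.val)
  · intro k hk
    simp only [Finset.mem_filter, Finset.mem_range]
    exact ⟨k.is_lt, (Finset.mem_filter.mp hk).2⟩
  · intro k1 _ k2 _ h
    exact Fin.ext h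
  · intro i hi
    simp only [Finset.mem_filter, Finset.mem_range] at hi
    exact ⟨⟨i, hi.1⟩, Finset.mem_filter.mpr ⟨Finset.mem_univ _, hi.2⟩, rfl⟩

lemma range_filter_lt (B : ℕ) : ((Finset.range m).filter (fun v => v < B)).card = min B m := by
  have h : (Finset.range m).filter (fun v => v < B) = Finset.range (min B m) := by
    ext v
    simp only [Finset.mem_filter, Finset.mem_range]
    omega
  rw [h, Finset.card_range]

lemma range_filter_ge (B : ℕ) (hB : B ≤ m) :
    ((Finset.range m).filter (fun v => B ≤ v)).card = m - B := by
  have h : (Finset.range m).filter (fun v => B ≤ v) = Finset.range m \ Finset.range B := by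
    ext v
    simp only [Finset.mem_filter, Finset.mem_range, Finset.mem_sdiff]
    omega
  rw [h, Finset.card_sdiff_of_subset (Finset.range_subset_range.mpr hB), Finset.card_range, Finset.card_range]

lemma card_St (hm : 3 ≤ m) (t : ℕ) (ht : t ≤ m) : (St m t).card = t := by
  unfold St
  by_cases h0 : t = 0
  · simp [h0]
  rw [if_neg h0]
  by_cases h1 : t ≤ m - 2
  · rw [if_pos h1]
    have heq : (Finset.univ.filter (fun k : Fin m => k.val + 2 ≤ (t+1)/2 ∨ m ≤ k.val + (t+2)/2)).card
        = ((Finset.range m).filter (fun v => v + 2 ≤ (t+1)/2 ∨ m ≤ v + (t+2)/2)).card :=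
      card_filter_val (fun v => v + 2 ≤ (t+1)/2 ∨ m ≤ v + (t+2)/2)
    rw [heq]
    have hsplit : (Finset.range m).filter (fun v => v + 2 ≤ (t+1)/2 ∨ m ≤ v + (t+2)/2)
        = ((Finset.range m).filter (fun v => v < (t+1)/2 - 1))
          ∪ ((Finset.range m).filter (fun v => m - (t+2)/2 ≤ v)) := by
      ext v
      simp only [Finset.mem_filter, Finset.mem_range, Finset.mem_union]
      omega
    rw [hsplit, Finset.card_union_of_disjoint]
    · rw [range_filter_lt, range_filter_ge _ (by omega)]
      omega
    · rw [Finset.disjoint_filter]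
      intro v hv h2
      simp only [Finset.mem_range] at hv
      omega
  · rw [if_neg h1]
    by_cases h2 : t = m - 1
    · rw [if_pos h2, Finset.card_erase_of_mem (Finset.mem_univ _), card_univ_fin]
      omega
    · rw [if_neg h2, card_univ_fin]
      omega

lemma St_zero : St m 0 = ∅ := by simp [St]

lemma St_subset_succ (hm : 3 ≤ m) (t : ℕ) (ht : t + 1 ≤ m) : St m t ⊆ St m (t + 1) := by
  intro k hk
  rw [mem_St_iff hm] at hk ⊢
  have hkv := k.is_lt
  split_ifs at hk ⊢ <;> first | trivial | omega

/-- greedy label value at each position -/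
lemma glab_val (hm : 3 ≤ m) (g : Equiv.Perm (Fin m)) (hg : IsGreedy g) (p : Fin m) :
    ((g.symm p : Fin m)).val = if 2 * p.val < m then 2 * p.val else 2 * (m - 1 - p.val) + 1 := by
  have hp := p.is_lt
  by_cases h1 : p.val < m / 2
  · rw [if_pos (by omega)]
    exact (hg p).1 h1
  · by_cases h2 : m - 1 - p.val < m / 2
    · rw [if_neg (by omega)]
      exact (hg p).2 h2
    · have hmid : 2 * p.val = m - 1 ∧ m % 2 = 1 := by omega
      rw [if_pos (by omega)]
      obtain ⟨q, hq⟩ : ∃ q : Fin m, g.symm q = ⟨m - 1, by omega⟩ :=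
        ⟨g ⟨m - 1, by omega⟩, Equiv.symm_apply_apply g _⟩
      have hqval : (g.symm q).val = m - 1 := by rw [hq]
      have hqp : q = p := by
        by_contra hne
        have hq1 : ¬ (q.val < m / 2) := by
          intro h
          have := (hg q).1 h
          omega
        have hq2 : ¬ (m - 1 - q.val < m / 2) := by
          intro h
          have := (hg q).2 h
          omega
        have hqv : q.val = p.val := by
          have := q.is_lt
          omega
        exact hne (Fin.ext hqv)
      rw [← hqp, hqval]
      omega

/-- greedy position of each label -/
lemma gpos_val (hm : 3 ≤ m) (g : Equiv.Perm (Fin m)) (hg : IsGreedy g) (l : Fin m) :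
    (g l).val = if l.val % 2 = 0 then l.val / 2 else m - (l.val + 1) / 2 := by
  have hl := l.is_lt
  set pv : ℕ := if l.val % 2 = 0 then l.val / 2 else m - (l.val + 1) / 2 with hpv
  have hpvlt : pv < m := by rw [hpv]; split <;> omega
  have hsymm : g.symm ⟨pv, hpvlt⟩ = l := by
    apply Fin.ext
    rw [glab_val hm g hg]
    simp only
    by_cases hpar : l.val % 2 = 0
    · have hpv2 : pv = l.val / 2 := by rw [hpv, if_pos hpar]
      rw [hpv2, if_pos (by omega)]
      omega
    · have hpv2 : pv = m - (l.val + 1) / 2 := by rw [hpv, if_neg hpar]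
      rw [hpv2, if_neg (by omega)]
      omega
  have hfin : g l = ⟨pv, hpvlt⟩ := by
    rw [← hsymm, Equiv.apply_symm_apply]
  rw [hfin]

end Greedy

section Profile

/-- the greedy coverage profile -/
def cfun (m t l : ℕ) : ℕ :=
  if t ≤ m - 2 then min t (min 3 ((t + 3 - l)/2))
  else if t = m - 1 then (if l + 4 ≤ m then 3 else 2) else 3

lemma Wins_distinct (hm : 3 ≤ m) (v : Fin m) :
    v ≠ v - 1 ∧ v ≠ v - 2 ∧ v - 1 ≠ v - 2 := by
  have h1 := val1 (m := m) hm; have h2 := val2 (m := m) hm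
  have e1 : (v - 1).val = if 1 ≤ v.val then v.val - 1 else v.val + m - 1 := by
    rw [subval, h1]
  have e2 : (v - 2).val = if 2 ≤ v.val then v.val - 2 else v.val + m - 2 := by
    rw [subval, h2]
  have hv := v.is_lt
  refine ⟨?_, ?_, ?_⟩
  · intro h; apply_fun Fin.val at h; rw [e1] at h; split at h <;> omega
  · intro h; apply_fun Fin.val at h; rw [e2] at h; split at h <;> omega
  · intro h; apply_fun Fin.val at h; rw [e1, e2] at h
    split at h <;> split at h <;> omega

lemma card_inter_triple (S : Finset (Fin m)) (x y z : Fin m)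
    (hxy : x ≠ y) (hxz : x ≠ z) (hyz : y ≠ z) :
    (S ∩ ({x, y, z} : Finset (Fin m))).card
      = (if x ∈ S then 1 else 0) + (if y ∈ S then 1 else 0) + (if z ∈ S then 1 else 0) := by
  rw [Finset.inter_comm, ← Finset.filter_mem_eq_inter, Finset.card_filter]
  rw [Finset.sum_insert (by simp [hxy, hxz]), Finset.sum_insert (by simp [hyz]),
    Finset.sum_singleton]
  ring

set_option maxHeartbeats 2000000 in
/-- the key greedy profile computation -/
lemma profile (hm : 3 ≤ m) (g : Equiv.Perm (Fin m)) (hg : IsGreedy g)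
    (t : ℕ) (ht1 : 1 ≤ t) (ht : t ≤ m) (l : Fin m) :
    ((St m t) ∩ Wins (g l)).card = cfun m t l.val := by
  obtain ⟨d1, d2, d3⟩ := Wins_distinct hm (g l)
  rw [Wins, card_inter_triple _ _ _ _ d1 d2 d3]
  set p := g l with hp
  have hpval := gpos_val hm g hg l
  have h1v := val1 (m := m) hm
  have h2v := val2 (m := m) hm
  have e1 : (p - 1).val = if 1 ≤ p.val then p.val - 1 else p.val + m - 1 := by
    rw [subval, h1v]
  have e2 : (p - 2).val = if 2 ≤ p.val then p.val - 2 else p.val + m - 2 := by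
    rw [subval, h2v]
  have hlv := l.is_lt
  have hpv := p.is_lt
  have hp1v := (p-1).is_lt
  have hp2v := (p-2).is_lt
  by_cases htr : t ≤ m - 2
  · have ht0 : ¬ (t = 0) := by omega
    have hmem : ∀ x : Fin m, (x ∈ St m t) = (x.val + 2 ≤ (t+1)/2 ∨ m ≤ x.val + (t+2)/2) := by
      intro x
      rw [mem_St_iff hm, if_neg ht0, if_pos htr]
    rw [cfun, if_pos htr]
    simp only [hmem]
    rw [e1, e2]
    split at hpval <;> split_ifs <;> omega
  · by_cases htm1 : t = m - 1
    · have ht0 : ¬ (t = 0) := by omega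
      have hmem : ∀ x : Fin m, (x ∈ St m t) = ¬ (x.val = m/2 - 1) := by
        intro x
        rw [mem_St_iff hm, if_neg ht0, if_neg htr, if_pos htm1]
      rw [cfun, if_neg htr, if_pos htm1]
      simp only [hmem]
      rw [e1, e2]
      split at hpval <;> split_ifs <;> omega
    · have htm : t = m := by omega
      have hmem : ∀ x : Fin m, (x ∈ St m t) = True := by
        intro x
        rw [mem_St_iff hm, if_neg (by omega), if_neg htr, if_neg htm1]
      rw [cfun, if_neg htr, if_neg htm1]
      simp only [hmem, if_true]

def Gpre (m t j : ℕ) : ℕ := ∑ i ∈ Finset.range j, cfun m t i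

lemma Gpre_eq1 (hm : 3 ≤ m) (t : ℕ) (ht1 : 1 ≤ t) (htr : t ≤ m - 2) (j : ℕ) :
    Gpre m t j = (if j ≤ t then 3*j else 3*t)
      - (if j+1 = t then 1 else if j = t then 2 else if j = t+1 then 1 else 0) := by
  induction j with
  | zero =>
    simp only [Gpre, Finset.range_zero, Finset.sum_empty]
    split_ifs <;> omega
  | succ j ih =>
    simp only [Gpre, Finset.sum_range_succ] at *
    rw [ih]
    simp only [cfun, if_pos htr]
    split_ifs <;> omega

lemma Gpre_eq2 (hm : 3 ≤ m) (j : ℕ) :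
    Gpre m (m-1) j = 3*j - (j - (m-3)) := by
  induction j with
  | zero => simp [Gpre]
  | succ j ih =>
    simp only [Gpre, Finset.sum_range_succ] at *
    rw [ih]
    simp only [cfun, if_neg (by omega : ¬ (m - 1 ≤ m - 2)), if_pos rfl]
    split_ifs <;> omega

lemma Gpre_eq3 (hm : 3 ≤ m) (j : ℕ) :
    Gpre m m j = 3*j := by
  induction j with
  | zero => simp [Gpre]
  | succ j ih =>
    simp only [Gpre, Finset.sum_range_succ] at *
    rw [ih]
    simp only [cfun, if_neg (by omega : ¬ (m ≤ m - 2)), if_neg (by omega : ¬ (m = m - 1))]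
    omega

/-- the master incidence bound -/
lemma le_Gpre (hm : 3 ≤ m) (T U : Finset (Fin m)) (t j : ℕ) (hT : T.card = t) (hU : U.card = j)
    (ht1 : 1 ≤ t) (ht : t ≤ m) (hj : j ≤ m) : Inc T U ≤ Gpre m t j := by
  by_cases hj0 : j = 0
  · have hUe : U = ∅ := Finset.card_eq_zero.mp (by omega)
    have : Inc T U = 0 := by
      rw [Inc_comm hm, hUe, Finset.sum_empty]
    rw [this]
    exact Nat.zero_le _
  have hUne : U.Nonempty := Finset.card_pos.mp (by omega)
  have hTne : T.Nonempty := Finset.card_pos.mp (by omega)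
  by_cases htr : t ≤ m - 2
  · rw [Gpre_eq1 hm t ht1 htr j]
    rcases Nat.lt_trichotomy j t with hlt | heq | hgt
    · by_cases hja : j + 1 = t
      · have := claim_a hm T U hUne (by omega) (by omega)
        split_ifs <;> omega
      · have := Inc_le_U hm T U
        split_ifs <;> omega
    · have := claim_b hm T U (by omega) (by omega) (by omega)
      split_ifs <;> omega
    · by_cases hjc : j = t + 1
      · have := claim_c hm T U hTne (by omega) (by omega)
        split_ifs <;> omega
      · have := Inc_le_S T U
        split_ifs <;> omega
  · by_cases htm1 : t = m - 1
    · subst htm1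
      rw [Gpre_eq2 hm j]
      rcases Nat.lt_trichotomy j (m-1) with hlt | heq | hgt
      · by_cases hja : j + 1 = m - 1
        · have := claim_a hm T U hUne (by omega) (by omega)
          omega
        · have := Inc_le_U hm T U
          omega
      · have := claim_b hm T U (by omega) (by omega) (by omega)
        omega
      · have h3 := Inc_le_S T U
        omega
    · have htm : t = m := by omega
      subst htm
      rw [Gpre_eq3 hm j]
      have := Inc_le_U hm T U
      omega

end Profile

section Analytic

lemma W_distinct (hm : 3 ≤ m) (k : Fin m) :
    k ≠ k + 1 ∧ k ≠ k + 2 ∧ k + 1 ≠ k + 2 := by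
  have h1 := val1 (m := m) hm; have h2 := val2 (m := m) hm
  have e1 : (k + 1).val = if k.val + 1 < m then k.val + 1 else k.val + 1 - m := by
    rw [addval, h1]
  have e2 : (k + 2).val = if k.val + 2 < m then k.val + 2 else k.val + 2 - m := by
    rw [addval, h2]
  have hk := k.is_lt
  refine ⟨?_, ?_, ?_⟩
  · intro h; apply_fun Fin.val at h; rw [e1] at h; split at h <;> omega
  · intro h; apply_fun Fin.val at h; rw [e2] at h; split at h <;> omega
  · intro h; apply_fun Fin.val at h; rw [e1, e2] at h
    split at h <;> split at h <;> omega

/-- window sum of `y`-values -/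
def Vf (ρ : Equiv.Perm (Fin m)) (y : Fin m → ℝ) (k : Fin m) : ℝ := ∑ p ∈ W k, y (ρ.symm p)

lemma dc (hm : 3 ≤ m) (ρ : Equiv.Perm (Fin m)) (y : Fin m → ℝ) (T : Finset (Fin m)) :
    ∑ k ∈ T, Vf ρ y k = ∑ l : Fin m, ((T ∩ Wins (ρ l)).card : ℝ) * y l := by
  unfold Vf
  calc ∑ k ∈ T, ∑ p ∈ W k, y (ρ.symm p)
      = ∑ k ∈ T, ∑ p : Fin m, (if p ∈ W k then y (ρ.symm p) else 0) := by
        refine Finset.sum_congr rfl (fun k _ => ?_)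
        rw [Finset.sum_ite_mem, Finset.univ_inter]
    _ = ∑ p : Fin m, ∑ k ∈ T, (if p ∈ W k then y (ρ.symm p) else 0) := Finset.sum_comm
    _ = ∑ p : Fin m, ((T ∩ Wins p).card : ℝ) * y (ρ.symm p) := by
        refine Finset.sum_congr rfl (fun p _ => ?_)
        have hcongr : ∀ k ∈ T, (if p ∈ W k then y (ρ.symm p) else 0)
            = (if k ∈ Wins p then y (ρ.symm p) else 0) := by
          intro k _
          simp only [mem_W_iff hm]
        rw [Finset.sum_congr rfl hcongr, Finset.sum_ite_mem, Finset.sum_const, nsmul_eq_mul]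
    _ = ∑ l : Fin m, ((T ∩ Wins (ρ l)).card : ℝ) * y l := by
        rw [← Equiv.sum_comp ρ (fun p => ((T ∩ Wins p).card : ℝ) * y (ρ.symm p))]
        refine Finset.sum_congr rfl (fun l _ => ?_)
        rw [Equiv.symm_apply_apply]

/-- Abel summation inequality -/
lemma abel_ge (n : ℕ) (c d : ℕ → ℝ) (hc : ∀ i, i + 1 < n → c (i+1) ≤ c i)
    (hD : ∀ j, j ≤ n → 0 ≤ ∑ i ∈ Finset.range j, d i) :
    (∑ i ∈ Finset.range n, d i) * c (n-1) ≤ ∑ i ∈ Finset.range n, c i * d i := by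
  induction n with
  | zero => simp
  | succ n ih =>
    rcases Nat.eq_zero_or_pos n with h0 | hpos
    · subst h0
      simp [mul_comm]
    · have ih' := ih (fun i h => hc i (by omega)) (fun j hj => hD j (by omega))
      rw [Finset.sum_range_succ, Finset.sum_range_succ]
      have h2 : c n ≤ c (n-1) := by
        have := hc (n-1) (by omega)
        rwa [Nat.sub_add_cancel hpos] at this
      have hDn : 0 ≤ ∑ i ∈ Finset.range n, d i := hD n (by omega)
      have hstep : (∑ i ∈ Finset.range n, d i) * c n ≤ (∑ i ∈ Finset.range n, d i) * c (n-1) :=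
        mul_le_mul_of_nonneg_left h2 hDn
      have hn1 : n + 1 - 1 = n := rfl
      rw [hn1]
      nlinarith

/-- Abel comparison for natural coefficient sequences -/
lemma nat_abel (n : ℕ) (M N : ℕ → ℕ) (c : ℕ → ℝ) (hc : ∀ i, i + 1 < n → c (i+1) ≤ c i)
    (hpre : ∀ j, j ≤ n → ∑ i ∈ Finset.range j, M i ≤ ∑ i ∈ Finset.range j, N i)
    (heq : ∑ i ∈ Finset.range n, M i = ∑ i ∈ Finset.range n, N i) :
    ∑ i ∈ Finset.range n, (M i : ℝ) * c i ≤ ∑ i ∈ Finset.range n, (N i : ℝ) * c i := by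
  have hD : ∀ j, j ≤ n → 0 ≤ ∑ i ∈ Finset.range j, ((N i : ℝ) - M i) := by
    intro j hj
    rw [Finset.sum_sub_distrib, sub_nonneg]
    exact_mod_cast hpre j hj
  have habel := abel_ge n c (fun i => (N i : ℝ) - M i) hc hD
  have hsum0 : ∑ i ∈ Finset.range n, ((N i : ℝ) - M i) = 0 := by
    rw [Finset.sum_sub_distrib, sub_eq_zero]
    exact_mod_cast heq.symm
  rw [hsum0, zero_mul] at habel
  have hexp : ∑ i ∈ Finset.range n, c i * ((N i : ℝ) - M i)
      = ∑ i ∈ Finset.range n, (N i : ℝ) * c i - ∑ i ∈ Finset.range n, (M i : ℝ) * c i := by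
    rw [← Finset.sum_sub_distrib]
    refine Finset.sum_congr rfl (fun i _ => ?_)
    ring
  rw [hexp] at habel
  linarith

def Lset (m : ℕ) [NeZero m] (j : ℕ) : Finset (Fin m) :=
  Finset.univ.filter (fun i : Fin m => i.val < j)

lemma card_Lset (j : ℕ) (hj : j ≤ m) : (Lset m j).card = j := by
  unfold Lset
  rw [card_filter_val (fun v => v < j), range_filter_lt]
  omega

lemma Lset_m : Lset m m = Finset.univ := by
  unfold Lset
  apply Finset.eq_univ_of_forall
  intro i
  exact Finset.mem_filter.mpr ⟨Finset.mem_univ _, i.is_lt⟩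

lemma sum_Lset {β : Type*} [AddCommMonoid β] (F : Fin m → β) (j : ℕ) (hj : j ≤ m) :
    ∑ i ∈ Finset.range j, F ((i : ℕ) : Fin m) = ∑ l ∈ Lset m j, F l := by
  apply Finset.sum_bij' (fun (a : ℕ) (_ : a ∈ Finset.range j) => ((a : ℕ) : Fin m))
    (fun (l : Fin m) (_ : l ∈ Lset m j) => l.val)
  · intro a ha
    have halt : a < j := Finset.mem_range.mp ha
    refine Finset.mem_filter.mpr ⟨Finset.mem_univ _, ?_⟩
    rw [Fin.val_cast_of_lt (by omega)]
    omega
  · intro l hl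
    exact Finset.mem_range.mpr (Finset.mem_filter.mp hl).2
  · intro a ha
    have halt : a < j := Finset.mem_range.mp ha
    rw [Fin.val_cast_of_lt (by omega : a < m)]
  · intro l hl
    exact Fin.cast_val_eq_self l
  · intro a ha
    rfl

lemma St_m (hm : 3 ≤ m) : St m m = Finset.univ := by
  unfold St
  rw [if_neg (by omega), if_neg (by omega), if_neg (by omega)]

lemma image_univ_perm (ρ : Equiv.Perm (Fin m)) : Finset.univ.image ρ = Finset.univ := by
  apply Finset.eq_univ_of_forall
  intro x
  exact Finset.mem_image.mpr ⟨ρ.symm x, Finset.mem_univ _, Equiv.apply_symm_apply ρ x⟩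

lemma Inc_univ (hm : 3 ≤ m) (T : Finset (Fin m)) : Inc T Finset.univ = 3 * T.card := by
  unfold Inc
  calc ∑ k ∈ T, (W k ∩ Finset.univ).card = ∑ _k ∈ T, 3 := by
        refine Finset.sum_congr rfl (fun k _ => ?_)
        rw [Finset.inter_univ, card_W hm]
    _ = 3 * T.card := by rw [Finset.sum_const, smul_eq_mul, mul_comm]

lemma Gpre_total (hm : 3 ≤ m) (t : ℕ) (ht1 : 1 ≤ t) (ht : t ≤ m) : Gpre m t m = 3 * t := by
  by_cases htr : t ≤ m - 2
  · rw [Gpre_eq1 hm t ht1 htr m]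
    split_ifs <;> omega
  · by_cases htm1 : t = m - 1
    · subst htm1
      rw [Gpre_eq2 hm m]
      omega
    · have htmeq : t = m := by omega
      rw [htmeq, Gpre_eq3 hm m]

/-- the main comparison: any `t` window sums are dominated by the greedy canonical family -/
lemma main_comp (hm : 3 ≤ m) (g : Equiv.Perm (Fin m)) (hg : IsGreedy g)
    (σ : Equiv.Perm (Fin m)) (y : Fin m → ℝ) (hy : ∀ i j : Fin m, i ≤ j → y j ≤ y i)
    (T : Finset (Fin m)) (t : ℕ) (hT : T.card = t) (ht1 : 1 ≤ t) (ht : t ≤ m) :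
    ∑ k ∈ T, Vf σ y k ≤ ∑ k ∈ St m t, Vf g y k := by
  rw [dc hm σ y T, dc hm g y (St m t)]
  have hprofile : ∀ l : Fin m, ((St m t ∩ Wins (g l)).card : ℝ) = ((cfun m t l.val : ℕ) : ℝ) := by
    intro l
    rw [profile hm g hg t ht1 ht l]
  have hL : ∑ l : Fin m, ((T ∩ Wins (σ l)).card : ℝ) * y l
      = ∑ i ∈ Finset.range m, (((T ∩ Wins (σ ((i : ℕ) : Fin m))).card : ℕ) : ℝ) * y ((i : ℕ) : Fin m) := by
    rw [← Fin.sum_univ_eq_sum_range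
      (fun i => (((T ∩ Wins (σ ((i : ℕ) : Fin m))).card : ℕ) : ℝ) * y ((i : ℕ) : Fin m)) m]
    refine Finset.sum_congr rfl (fun l _ => ?_)
    rw [Fin.cast_val_eq_self]
  have hR : ∑ l : Fin m, ((St m t ∩ Wins (g l)).card : ℝ) * y l
      = ∑ i ∈ Finset.range m, ((cfun m t i : ℕ) : ℝ) * y ((i : ℕ) : Fin m) := by
    rw [← Fin.sum_univ_eq_sum_range (fun i => ((cfun m t i : ℕ) : ℝ) * y ((i : ℕ) : Fin m)) m]
    refine Finset.sum_congr rfl (fun l _ => ?_)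
    rw [Fin.cast_val_eq_self, hprofile l]
  rw [hL, hR]
  apply nat_abel m (fun i => (T ∩ Wins (σ ((i : ℕ) : Fin m))).card) (fun i => cfun m t i)
    (fun i => y ((i : ℕ) : Fin m))
  · intro i hi
    apply hy
    rw [Fin.le_def, Fin.val_cast_of_lt (by omega : i < m), Fin.val_cast_of_lt (by omega : i + 1 < m)]
    omega
  · intro j hj
    have hMj : ∑ i ∈ Finset.range j, (T ∩ Wins (σ ((i : ℕ) : Fin m))).card
        = Inc T ((Lset m j).image σ) := by
      rw [Inc_comm hm, Finset.sum_image (fun x _ y _ h => σ.injective h)]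
      exact sum_Lset (fun l => (T ∩ Wins (σ l)).card) j hj
    have hNj : ∑ i ∈ Finset.range j, cfun m t i = Gpre m t j := rfl
    rw [hMj, hNj]
    apply le_Gpre hm T _ t j hT ?_ ht1 ht hj
    rw [Finset.card_image_of_injective _ σ.injective, card_Lset j hj]
  · have hM : ∑ i ∈ Finset.range m, (T ∩ Wins (σ ((i : ℕ) : Fin m))).card
        = Inc T ((Lset m m).image σ) := by
      rw [Inc_comm hm, Finset.sum_image (fun x _ y _ h => σ.injective h)]
      exact sum_Lset (fun l => (T ∩ Wins (σ l)).card) m le_rfl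
    rw [hM, Lset_m, image_univ_perm, Inc_univ hm, hT]
    exact (Gpre_total hm t ht1 ht).symm

end Analytic

section Final

lemma prod_W (hm : 3 ≤ m) (ρ : Equiv.Perm (Fin m)) (a : Fin m → ℝ) (k : Fin m) :
    ∏ i ∈ Finset.range 3, a (ρ.symm ⟨((k : ℕ) + i) % m, Nat.mod_lt _ k.pos⟩)
      = ∏ p ∈ W k, a (ρ.symm p) := by
  obtain ⟨d1, d2, d3⟩ := W_distinct hm k
  have h0 : (⟨((k : ℕ) + 0) % m, Nat.mod_lt _ k.pos⟩ : Fin m) = k := by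
    apply Fin.ext
    simp only
    rw [Nat.add_zero]
    exact Nat.mod_eq_of_lt k.is_lt
  have h1 : (⟨((k : ℕ) + 1) % m, Nat.mod_lt _ k.pos⟩ : Fin m) = k + 1 := by
    apply Fin.ext
    simp only
    rw [Fin.val_add, val1 hm]
  have h2 : (⟨((k : ℕ) + 2) % m, Nat.mod_lt _ k.pos⟩ : Fin m) = k + 2 := by
    apply Fin.ext
    simp only
    rw [Fin.val_add, val2 hm]
  rw [Finset.prod_range_succ, Finset.prod_range_succ, Finset.prod_range_one]
  rw [W, Finset.prod_insert (by simp [d1, d2]), Finset.prod_insert (by simp [d3]),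
    Finset.prod_singleton]
  rw [h0, h1, h2]
  ring

lemma cyclicP_eq_exp (hm : 3 ≤ m) (ρ : Equiv.Perm (Fin m)) (a : Fin m → ℝ) (ha : ∀ i, 0 < a i) :
    cyclicP m 3 ρ a = ∑ k : Fin m, Real.exp (Vf ρ (fun l => Real.log (a l)) k) := by
  unfold cyclicP
  refine Finset.sum_congr rfl (fun k _ => ?_)
  rw [prod_W hm ρ a k, Vf, Real.exp_sum]
  refine Finset.prod_congr rfl (fun p _ => ?_)
  rw [Real.exp_log (ha _)]

/-- the main theorem, namespaced version -/
theorem main_ineq (hm : 3 ≤ m) (a : Fin m → ℝ) (ha : ∀ i, 0 < a i)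
    (hdec : Antitone a) (g : Equiv.Perm (Fin m)) (hg : IsGreedy g)
    (σ : Equiv.Perm (Fin m)) :
    cyclicP m 3 σ a ≤ cyclicP m 3 g a := by
  set y : Fin m → ℝ := fun l => Real.log (a l) with hy
  have hyanti : ∀ i j : Fin m, i ≤ j → y j ≤ y i := by
    intro i j h
    exact Real.log_le_log (ha j) (hdec h)
  set τ : Equiv.Perm (Fin m) := Tuple.sort (fun k => - Vf σ y k) with hτ
  have hmono := Tuple.monotone_sort (fun k => - Vf σ y k)
  have hvanti : ∀ i j : Fin m, i ≤ j → Vf σ y (τ j) ≤ Vf σ y (τ i) := by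
    intro i j hij
    have h := hmono hij
    simp only [Function.comp_apply] at h
    rw [← hτ] at h
    linarith
  set v : ℕ → ℝ := fun i => Vf σ y (τ ((i : ℕ) : Fin m)) with hv
  set u : ℕ → ℝ := fun i => (∑ k ∈ St m (i+1), Vf g y k) - (∑ k ∈ St m i, Vf g y k) with hu
  have hu_sum : ∀ j, ∑ i ∈ Finset.range j, u i = ∑ k ∈ St m j, Vf g y k := by
    intro j
    induction j with
    | zero => simp [St_zero]
    | succ j ih =>
      rw [Finset.sum_range_succ, ih, hu]
      ring
  have hv_sum : ∀ j, j ≤ m → ∑ i ∈ Finset.range j, v i = ∑ k ∈ (Lset m j).image τ, Vf σ y k := by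
    intro j hj
    rw [Finset.sum_image (fun x _ y _ h => τ.injective h)]
    exact sum_Lset (fun l => Vf σ y (τ l)) j hj
  have hD : ∀ j, j ≤ m → ∑ i ∈ Finset.range j, v i ≤ ∑ i ∈ Finset.range j, u i := by
    intro j hj
    rcases Nat.eq_zero_or_pos j with h0 | hpos
    · subst h0; simp
    rw [hu_sum j, hv_sum j hj]
    apply main_comp hm g hg σ y hyanti _ j ?_ hpos hj
    rw [Finset.card_image_of_injective _ τ.injective, card_Lset j hj]
  have hDm : ∑ i ∈ Finset.range m, v i = ∑ i ∈ Finset.range m, u i := by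
    rw [hu_sum m, hv_sum m le_rfl, Lset_m, image_univ_perm, St_m hm]
    rw [dc hm σ y Finset.univ, dc hm g y Finset.univ]
    refine Finset.sum_congr rfl (fun l _ => ?_)
    rw [Finset.univ_inter, Finset.univ_inter, card_Wins hm, card_Wins hm]
  have hvnat : ∀ i, i + 1 < m → v (i+1) ≤ v i := by
    intro i h
    apply hvanti
    rw [Fin.le_def, Fin.val_cast_of_lt (by omega : i < m),
      Fin.val_cast_of_lt (by omega : i + 1 < m)]
    omega
  have hexpv : ∑ i ∈ Finset.range m, Real.exp (v i) = cyclicP m 3 σ a := by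
    rw [cyclicP_eq_exp hm σ a ha]
    rw [← Fin.sum_univ_eq_sum_range (fun i => Real.exp (Vf σ y (τ ((i : ℕ) : Fin m)))) m]
    rw [← Equiv.sum_comp τ (fun k => Real.exp (Vf σ y k))]
    refine Finset.sum_congr rfl (fun l _ => ?_)
    rw [Fin.cast_val_eq_self]
  have hexpu : ∑ i ∈ Finset.range m, Real.exp (u i) = cyclicP m 3 g a := by
    rw [cyclicP_eq_exp hm g a ha]
    have hstep : ∀ j, j ≤ m → ∑ i ∈ Finset.range j, Real.exp (u i)
        = ∑ k ∈ St m j, Real.exp (Vf g y k) := by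
      intro j hj
      induction j with
      | zero => simp [St_zero]
      | succ j ih =>
        obtain ⟨x, hx, hins⟩ := exists_insert_of_card (St m j) (St m (j+1))
          (St_subset_succ hm j hj)
          (by rw [card_St hm (j+1) hj, card_St hm j (by omega)])
        have huj : u j = Vf g y x := by
          rw [hu]
          simp only
          rw [hins, Finset.sum_insert hx]
          ring
        rw [Finset.sum_range_succ, ih (by omega), hins, Finset.sum_insert hx, huj]
        ring
    rw [hstep m le_rfl, St_m hm]
  have hptwise : ∀ i, Real.exp (v i) * (u i - v i) ≤ Real.exp (u i) - Real.exp (v i) := by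
    intro i
    have h := Real.add_one_le_exp (u i - v i)
    have hpos : 0 < Real.exp (v i) := Real.exp_pos _
    have hmul : Real.exp (u i) = Real.exp (v i) * Real.exp (u i - v i) := by
      rw [← Real.exp_add]
      ring_nf
    nlinarith
  have habel := abel_ge m (fun i => Real.exp (v i)) (fun i => u i - v i)
    (fun i hi => Real.exp_le_exp.mpr (hvnat i hi))
    (by
      intro j hj
      rw [Finset.sum_sub_distrib, sub_nonneg]
      exact hD j hj)
  have htot : ∑ i ∈ Finset.range m, (u i - v i) = 0 := by
    rw [Finset.sum_sub_distrib, sub_eq_zero]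
    exact hDm.symm
  rw [htot, zero_mul] at habel
  have hsum_le : ∑ i ∈ Finset.range m, Real.exp (v i) * (u i - v i)
      ≤ ∑ i ∈ Finset.range m, (Real.exp (u i) - Real.exp (v i)) :=
    Finset.sum_le_sum (fun i _ => hptwise i)
  have hfin : 0 ≤ ∑ i ∈ Finset.range m, (Real.exp (u i) - Real.exp (v i)) :=
    le_trans habel hsum_le
  rw [Finset.sum_sub_distrib, hexpu, hexpv] at hfin
  linarith

end Final

end CyclicAux

/-- The greedy permutation maximises the sum of products of triples of cyclically consecutive entries. -/
theorem stmt_4 (m : ℕ) (hm : 3 ≤ m) (a : Fin m → ℝ) (ha : ∀ i, 0 < a i)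
    (hdec : Antitone a) (g : Equiv.Perm (Fin m)) (hg : IsGreedy g)
    (σ : Equiv.Perm (Fin m)) :
    cyclicP m 3 σ a ≤ cyclicP m 3 g a := by
  haveI : NeZero m := ⟨by omega⟩
  exact CyclicAux.main_ineq hm a ha hdec g hg σ
end

section
/- Let a_0 ≥ a_1 ≥ ... ≥ a_{m-1} > 0 and suppose that for all r ≤ 3 the greedy permutation maximises P_r over all permutations for every decreasing positive vector (of any length). Then for r ∈ {m-3, m-2, m-1, m} the greedy permutation also maximises P_r(·; a): for every permutation σ, P_r(σ_greedy; a) ≥ P_r(σ; a). (Duality via the identity ∏a · P_{m-r}(σ; a⁻¹) = P_r(σ; a) and reversal invariance.) -/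
open Fin.NatCast Fin.CommRing

noncomputable def Qc (m : ℕ) [NeZero m] (r : ℕ) (f : Fin m → ℝ) : ℝ :=
  ∑ k : Fin m, ∏ i ∈ Finset.range r, f (k + (i : Fin m))

lemma cyclicP_eq_Qc (m r : ℕ) [NeZero m] (σ : Equiv.Perm (Fin m)) (a : Fin m → ℝ) :
    cyclicP m r σ a = Qc m r (fun x => a (σ.symm x)) := by
  unfold cyclicP Qc
  refine Finset.sum_congr rfl fun k _ => Finset.prod_congr rfl fun i _ => ?_
  congr 1
  apply Fin.ext
  simp [Fin.add_def, Fin.val_natCast, Nat.add_mod]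

lemma Qc_rot (m : ℕ) [NeZero m] (r : ℕ) (f : Fin m → ℝ) (t : Fin m) :
    Qc m r (fun x => f (x + t)) = Qc m r f := by
  unfold Qc
  rw [← Equiv.sum_comp (Equiv.addRight t) (fun k => ∏ i ∈ Finset.range r, f (k + (i : Fin m)))]
  refine Finset.sum_congr rfl fun k _ => Finset.prod_congr rfl fun i _ => ?_
  congr 1
  simp [Equiv.addRight]
  ring

lemma Qc_refl (m : ℕ) [NeZero m] (r : ℕ) (f : Fin m → ℝ) (c : Fin m) :
    Qc m r (fun x => f (c - x)) = Qc m r f := by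
  unfold Qc
  rw [← Equiv.sum_comp (Equiv.subLeft (c - ((r - 1 : ℕ) : Fin m)))
    (fun k => ∏ i ∈ Finset.range r, f (k + (i : Fin m)))]
  refine Finset.sum_congr rfl fun k _ => ?_
  rw [← Finset.prod_range_reflect]
  refine Finset.prod_congr rfl fun i hi => ?_
  rw [Finset.mem_range] at hi
  congr 1
  have h1 : ((r - 1 - i : ℕ) : Fin m) + ((i : ℕ) : Fin m) = ((r - 1 : ℕ) : Fin m) := by
    rw [← Nat.cast_add]
    congr 1
    omega
  have h2 : ((r - 1 - i : ℕ) : Fin m) = ((r - 1 : ℕ) : Fin m) - ((i : ℕ) : Fin m) :=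
    eq_sub_of_add_eq h1
  simp only [Equiv.subLeft_apply]
  rw [h2]
  ring

lemma Qc_dual (m : ℕ) [NeZero m] (r : ℕ) (hr : r ≤ m) (f : Fin m → ℝ)
    (hf : ∀ x, f x ≠ 0) :
    Qc m r f = (∏ x, f x) * Qc m (m - r) (fun x => (f x)⁻¹) := by
  have key : ∀ k : Fin m, ∏ i ∈ Finset.range m, f (k + (i : Fin m)) = ∏ x, f x := by
    intro k
    rw [← Fin.prod_univ_eq_prod_range (fun i => f (k + ((i : ℕ) : Fin m))) m]
    rw [← Equiv.prod_comp (Equiv.addLeft k) f]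
    refine Finset.prod_congr rfl fun x _ => ?_
    simp [Fin.cast_val_eq_self]
  unfold Qc
  rw [Finset.mul_sum]
  rw [← Equiv.sum_comp (Equiv.addRight ((r : ℕ) : Fin m))
    (fun k => (∏ x, f x) * ∏ i ∈ Finset.range (m - r), (f (k + (i : Fin m)))⁻¹)]
  refine Finset.sum_congr rfl fun k _ => ?_
  have hsplit : ∏ i ∈ Finset.range m, f (k + (i : Fin m)) =
      (∏ i ∈ Finset.range r, f (k + (i : Fin m))) *
      ∏ i ∈ Finset.range (m - r), f (k + ((r + i : ℕ) : Fin m)) := by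
    have hm' : Finset.range m = Finset.range (r + (m - r)) := by
      congr 1; omega
    rw [hm', Finset.prod_range_add]
  have hkey := key k
  rw [hsplit] at hkey
  have hne : ∏ i ∈ Finset.range (m - r), f (k + ((r + i : ℕ) : Fin m)) ≠ 0 :=
    Finset.prod_ne_zero_iff.2 fun i _ => hf _
  have : ∏ i ∈ Finset.range r, f (k + (i : Fin m)) =
      (∏ x, f x) * (∏ i ∈ Finset.range (m - r), f (k + ((r + i : ℕ) : Fin m)))⁻¹ := by
    rw [← hkey, mul_inv_cancel_right₀ hne]
  rw [this, ← Finset.prod_inv_distrib]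
  congr 1
  refine Finset.prod_congr rfl fun i _ => ?_
  congr 2
  simp only [Equiv.coe_addRight, Nat.cast_add]
  ring

lemma nat_mod_helper (x m : ℕ) (h : x < 2 * m) :
    x % m = if x < m then x else x - m := by
  split_ifs with h1
  · exact Nat.mod_eq_of_lt h1
  · rw [Nat.mod_eq_sub_mod (by omega)]
    exact Nat.mod_eq_of_lt (by omega)

lemma gsymm_val {m : ℕ} (g : Equiv.Perm (Fin m)) (hg : IsGreedy g) (i : Fin m) :
    ((g.symm i : ℕ)) = if (i : ℕ) < m / 2 then 2 * (i : ℕ)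
      else if m - 1 - (i : ℕ) < m / 2 then 2 * (m - 1 - (i : ℕ)) + 1 else m - 1 := by
  have hm : 0 < m := i.pos
  obtain ⟨h1, h2⟩ := hg i
  split_ifs with c1 c2
  · exact h1 c1
  · exact h2 c2
  · have hi : (i : ℕ) = (m - 1) / 2 ∧ m % 2 = 1 := by
      have := i.isLt; constructor <;> omega
    set p := g ⟨m - 1, by omega⟩ with hp
    have hgp : g.symm p = ⟨m - 1, by omega⟩ := Equiv.symm_apply_apply g _
    obtain ⟨k1, k2⟩ := hg p
    have hpv : (p : ℕ) = (m - 1) / 2 := by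
      by_cases d1 : (p : ℕ) < m / 2
      · have := k1 d1
        rw [hgp] at this
        simp only [Fin.val_mk] at this
        omega
      · by_cases d2 : m - 1 - (p : ℕ) < m / 2
        · have := k2 d2
          rw [hgp] at this
          simp only [Fin.val_mk] at this
          omega
        · have := p.isLt; omega
    have hip : p = i := Fin.ext (by omega)
    rw [← hip, hgp]

lemma rev_gsymm_even {m : ℕ} [NeZero m] (he : m % 2 = 0) (g : Equiv.Perm (Fin m))
    (hg : IsGreedy g) (p : Fin m) :
    Fin.rev (g.symm p) = g.symm (p + ((m / 2 : ℕ) : Fin m)) := by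
  have hm : 0 < m := p.pos
  set q := p + ((m / 2 : ℕ) : Fin m) with hq
  have hc : (((m / 2 : ℕ) : Fin m) : ℕ) = m / 2 := by
    rw [Fin.val_natCast]; exact Nat.mod_eq_of_lt (by omega)
  have hqv : (q : ℕ) = ((p : ℕ) + m / 2) % m := by
    rw [hq, Fin.add_def, hc]
  rw [nat_mod_helper _ _ (by have := p.isLt; omega)] at hqv
  apply Fin.val_injective
  rw [Fin.val_rev, gsymm_val g hg p, gsymm_val g hg q]
  have h1 := p.isLt
  have h2 := q.isLt
  split_ifs at hqv ⊢ <;> omega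

lemma rev_gsymm_odd {m : ℕ} [NeZero m] (ho : m % 2 = 1) (g : Equiv.Perm (Fin m))
    (hg : IsGreedy g) (p : Fin m) :
    Fin.rev (g.symm p) = g.symm ((((m - 1) / 2 : ℕ) : Fin m) - p) := by
  have hm : 0 < m := p.pos
  set q := (((m - 1) / 2 : ℕ) : Fin m) - p with hq
  have hc : ((((m - 1) / 2 : ℕ) : Fin m) : ℕ) = (m - 1) / 2 := by
    rw [Fin.val_natCast]; exact Nat.mod_eq_of_lt (by omega)
  have hqv : (q : ℕ) = ((m - (p : ℕ)) + (m - 1) / 2) % m := by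
    rw [hq, Fin.sub_def, hc]
  rw [nat_mod_helper _ _ (by have := p.isLt; omega)] at hqv
  apply Fin.val_injective
  rw [Fin.val_rev, gsymm_val g hg p, gsymm_val g hg q]
  have h1 := p.isLt
  have h2 := q.isLt
  split_ifs at hqv ⊢ <;> omega

lemma dual_side (m r : ℕ) [NeZero m] (hr : r ≤ m) (a : Fin m → ℝ) (ha : ∀ i, 0 < a i)
    (σ : Equiv.Perm (Fin m)) :
    cyclicP m r σ a = (∏ x, a x) * Qc m (m - r) (fun x => (a (σ.symm x))⁻¹) := by
  rw [cyclicP_eq_Qc, Qc_dual m r hr _ (fun x => (ha _).ne'), Equiv.prod_comp σ.symm a]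

/-- If the greedy permutation maximises `P_r` for all `r ≤ 3` (for every length and
every decreasing positive vector), then it also maximises `P_r` for `m-3 ≤ r ≤ m`. -/
theorem stmt_5
    (H : ∀ (n : ℕ) (b : Fin n → ℝ), (∀ i, 0 < b i) → Antitone b →
      ∀ r : ℕ, r ≤ 3 → ∀ g σ : Equiv.Perm (Fin n), IsGreedy g →
        cyclicP n r σ b ≤ cyclicP n r g b)
    (m : ℕ) (hm : 4 ≤ m) (a : Fin m → ℝ) (ha : ∀ i, 0 < a i) (hdec : Antitone a)
    (r : ℕ) (hr1 : m - 3 ≤ r) (hr2 : r ≤ m)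
    (g σ : Equiv.Perm (Fin m)) (hg : IsGreedy g) :
    cyclicP m r σ a ≤ cyclicP m r g a := by
  haveI : NeZero m := ⟨by omega⟩
  set s := m - r with hs
  have hs3 : s ≤ 3 := by omega
  set b : Fin m → ℝ := fun j => (a (Fin.rev j))⁻¹ with hb
  have hbpos : ∀ i, 0 < b i := fun i => inv_pos.2 (ha _)
  have hbanti : Antitone b := by
    intro i j hij
    exact inv_anti₀ (ha _) (hdec (Fin.rev_le_rev.2 hij))
  set τ : Equiv.Perm (Fin m) := Fin.revPerm.trans σ with hτ
  have hτs : ∀ x, τ.symm x = Fin.rev (σ.symm x) := by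
    intro x; simp [hτ, Equiv.symm_trans_apply]
  have hτb : Qc m s (fun x => (a (σ.symm x))⁻¹) = cyclicP m s τ b := by
    rw [cyclicP_eq_Qc]
    congr 1
    funext x
    rw [hτs, hb]
    simp [Fin.rev_rev]
  have hstep : Qc m s (fun x => (a (g.symm x))⁻¹) = Qc m s (fun x => b (g.symm x)) := by
    have hrev : ∀ x : Fin m, (a (g.symm x))⁻¹ = b (Fin.rev (g.symm x)) := by
      intro x; rw [hb]; simp [Fin.rev_rev]
    rcases Nat.even_or_odd m with he | ho
    · have he' : m % 2 = 0 := Nat.even_iff.1 he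
      have : (fun x => (a (g.symm x))⁻¹)
          = fun x => (fun y => b (g.symm y)) (x + ((m / 2 : ℕ) : Fin m)) := by
        funext x; rw [hrev, rev_gsymm_even he' g hg]
      rw [this]
      exact Qc_rot m s (fun y => b (g.symm y)) (((m / 2 : ℕ) : Fin m))
    · have ho' : m % 2 = 1 := Nat.odd_iff.1 ho
      have : (fun x => (a (g.symm x))⁻¹)
          = fun x => (fun y => b (g.symm y)) ((((m - 1) / 2 : ℕ) : Fin m) - x) := by
        funext x; rw [hrev, rev_gsymm_odd ho' g hg]
      rw [this]
      exact Qc_refl m s (fun y => b (g.symm y)) ((((m - 1) / 2 : ℕ) : Fin m))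
  have hgside : Qc m s (fun x => b (g.symm x)) = cyclicP m s g b :=
    (cyclicP_eq_Qc m s g b).symm
  have hprod : (0 : ℝ) < ∏ x, a x := Finset.prod_pos fun i _ => ha i
  calc cyclicP m r σ a
      = (∏ x, a x) * Qc m s (fun x => (a (σ.symm x))⁻¹) := dual_side m r hr2 a ha σ
    _ = (∏ x, a x) * cyclicP m s τ b := by rw [hτb]
    _ ≤ (∏ x, a x) * cyclicP m s g b :=
        mul_le_mul_of_nonneg_left (H m b hbpos hbanti s hs3 g τ hg) hprod.le
    _ = (∏ x, a x) * Qc m s (fun x => (a (g.symm x))⁻¹) := by rw [← hgside, hstep]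
    _ = cyclicP m r g a := (dual_side m r hr2 a ha g).symm
end

section
/- Define the velocity functional v(p) = (1 - γ) / (1 - γ + (2/m)·∑_{r=1}^{m} P_r(I; ρ)) as above. Then v is invariant under reversal of the vector p: v(p ∘ τ) = v(p), where τ(i) = (m - 1 - i) (reversal of order). -/
/-- The velocity functional
`v(p) = (1 - γ)/(1 - γ + (2/m) ∑_{r=1}^{m} P_r(I; ρ))` where `ρᵢ = (1 - pᵢ)/pᵢ`
and `γ = ∏ᵢ ρᵢ`. -/
noncomputable def vel (m : ℕ) (p : Fin m → ℝ) : ℝ :=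
  (1 - ∏ i, (1 - p i) / p i) /
    (1 - (∏ i, (1 - p i) / p i) +
      (2 / (m : ℝ)) * ∑ r ∈ Finset.Icc 1 m, cyclicP m r 1 (fun i => (1 - p i) / p i))

open Fin.CommRing

private lemma fin_mk_eq_add (n i : ℕ) (k : Fin (n + 1)) :
    (⟨((k : ℕ) + i) % (n + 1), Nat.mod_lt _ k.pos⟩ : Fin (n + 1)) = k + (i : Fin (n + 1)) := by
  apply Fin.ext
  simp [Fin.add_def, Fin.val_natCast, Nat.add_mod]

private lemma tau_eq (n : ℕ) (τ : Equiv.Perm (Fin (n + 1)))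
    (hτ : ∀ i : Fin (n + 1), ((τ i : ℕ)) = n + 1 - 1 - (i : ℕ)) (x : Fin (n + 1)) :
    τ x = -x - 1 := by
  apply Fin.ext
  rw [hτ]
  have hx : (x : ℕ) < n + 1 := x.isLt
  have h0 : -x - 1 = -(x + 1) := by ring
  rw [h0]
  simp only [Fin.neg_def, Fin.add_def, Fin.val_one']
  rcases Nat.eq_zero_or_pos n with h | h
  · subst h; omega
  · rw [Nat.mod_eq_of_lt (show (1:ℕ) < n+1 by omega)]
    rcases Nat.lt_or_ge (x : ℕ) n with h2 | h2
    · rw [Nat.mod_eq_of_lt (show (x:ℕ)+1 < n+1 by omega),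
        Nat.mod_eq_of_lt (show n+1-((x:ℕ)+1) < n+1 by omega)]
      omega
    · have hx2 : (x : ℕ) = n := by omega
      rw [hx2, Nat.mod_self]
      simp [Nat.mod_self]

private lemma cyclicP_rev (n r : ℕ) (τ : Equiv.Perm (Fin (n + 1)))
    (hτ : ∀ i : Fin (n + 1), ((τ i : ℕ)) = n + 1 - 1 - (i : ℕ)) (a : Fin (n + 1) → ℝ) :
    cyclicP (n + 1) r 1 (a ∘ τ) = cyclicP (n + 1) r 1 a := by
  unfold cyclicP
  simp only [Equiv.Perm.one_def, Equiv.refl_symm, Equiv.refl_apply, Function.comp_apply,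
    fin_mk_eq_add, tau_eq n τ hτ]
  rcases Nat.eq_zero_or_pos r with hr | hr
  · simp [hr]
  have key : ∀ k : Fin (n + 1),
      (∏ i ∈ Finset.range r, a (-(k + (i : Fin (n + 1))) - 1)) =
      ∏ i ∈ Finset.range r, a ((-k - (r : Fin (n + 1))) + (i : Fin (n + 1))) := by
    intro k
    rw [← Finset.prod_range_reflect (fun i => a ((-k - (r : Fin (n + 1))) + (i : Fin (n + 1)))) r]
    apply Finset.prod_congr rfl
    intro j hj
    rw [Finset.mem_range] at hj
    congr 1
    have h1 : ((r - 1 - j : ℕ) : Fin (n + 1)) = (r : Fin (n + 1)) - 1 - (j : Fin (n + 1)) := by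
      rw [Nat.cast_sub (by omega), Nat.cast_sub (by omega)]
      simp
    rw [h1]
    ring
  simp only [key]
  exact Fintype.sum_equiv ((Equiv.neg _).trans (Equiv.subRight ((r : Fin (n + 1)))))
    _ _ (fun k => rfl)

/-- The velocity is invariant under reversal of the vector `p`. -/
theorem stmt_10 (m : ℕ) (hm : 1 ≤ m) (p : Fin m → ℝ) (hp : ∀ i, 0 < p i ∧ p i < 1)
    (hγ : (∏ i, (1 - p i) / p i) < 1) (τ : Equiv.Perm (Fin m))
    (hτ : ∀ i : Fin m, ((τ i : ℕ)) = m - 1 - (i : ℕ)) :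
    vel m (p ∘ τ) = vel m p := by
  obtain ⟨n, rfl⟩ : ∃ n, m = n + 1 := ⟨m - 1, by omega⟩
  unfold vel
  have hprod : (∏ i, (1 - (p ∘ τ) i) / (p ∘ τ) i) = ∏ i, (1 - p i) / p i :=
    Equiv.prod_comp τ (fun i => (1 - p i) / p i)
  rw [hprod]
  congr 2
  congr 1
  apply Finset.sum_congr rfl
  intro r _
  have : (fun i => (1 - (p ∘ τ) i) / (p ∘ τ) i) = (fun i => (1 - p i) / p i) ∘ τ := rfl
  rw [this, cyclicP_rev n r τ hτ]
end

section
/- The velocity functional v(p) = (1 - γ)/(1 - γ + (2/m)∑_{r=1}^{m} P_r(I;ρ)) is strictly increasing in each coordinate p_i on the region where γ(p) < 1: if p' agrees with p except p'_j > p_j, and both have γ < 1, then v(p') > v(p). -/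
/-- Each cyclic-run product is an affine function of the updated coordinate. -/
lemma prod_update_affine (m : ℕ) (ρ : Fin m → ℝ) (hρ : ∀ i, 0 ≤ ρ i) (j : Fin m)
    (r : ℕ) (k : Fin m) :
    ∃ a b : ℝ, 0 ≤ a ∧ 0 ≤ b ∧ (r ≤ m → ∀ x : ℝ,
      ∏ i ∈ Finset.range r,
        Function.update ρ j x ⟨((k : ℕ) + i) % m, Nat.mod_lt _ k.pos⟩ = a + b * x) := by
  set idx : ℕ → Fin m := fun i => ⟨((k : ℕ) + i) % m, Nat.mod_lt _ k.pos⟩ with hidx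
  set t := (Finset.range r).filter (fun i => idx i = j) with ht
  set Q := ∏ i ∈ (Finset.range r).filter (fun i => ¬ idx i = j), ρ (idx i) with hQdef
  have hQ : 0 ≤ Q := Finset.prod_nonneg fun i _ => hρ _
  have key : ∀ x : ℝ, ∏ i ∈ Finset.range r, Function.update ρ j x (idx i)
      = (∏ _i ∈ t, x) * Q := by
    intro x
    rw [← Finset.prod_filter_mul_prod_filter_not (Finset.range r) (fun i => idx i = j)]
    congr 1
    · exact Finset.prod_congr rfl fun i hi => by
        rw [(Finset.mem_filter.mp hi).2, Function.update_self]
    · exact Finset.prod_congr rfl fun i hi =>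
        Function.update_of_ne (Finset.mem_filter.mp hi).2 _ _
  by_cases h : t = ∅
  · refine ⟨Q, 0, hQ, le_refl _, fun _ x => ?_⟩
    rw [key x, h]
    simp
  · refine ⟨0, Q, le_refl _, hQ, fun hr x => ?_⟩
    have huniq : ∀ i1 ∈ t, ∀ i2 ∈ t, i1 = i2 := by
      intro i1 h1 i2 h2
      obtain ⟨hr1, he1⟩ := Finset.mem_filter.mp h1
      obtain ⟨hr2, he2⟩ := Finset.mem_filter.mp h2
      have hie : ((k : ℕ) + i1) % m = ((k : ℕ) + i2) % m :=
        congrArg Fin.val (he1.trans he2.symm)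
      have h1m : i1 < m := lt_of_lt_of_le (Finset.mem_range.mp hr1) hr
      have h2m : i2 < m := lt_of_lt_of_le (Finset.mem_range.mp hr2) hr
      have : i1 % m = i2 % m := Nat.ModEq.add_left_cancel' (k : ℕ) hie
      rwa [Nat.mod_eq_of_lt h1m, Nat.mod_eq_of_lt h2m] at this
    have hcard : t.card = 1 := by
      have h1 : t.card ≤ 1 := Finset.card_le_one.mpr fun a ha b hb => huniq a ha b hb
      have h0 : 0 < t.card := Finset.card_pos.mpr (Finset.nonempty_of_ne_empty h)
      omega
    rw [key x, Finset.prod_const, hcard]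
    ring

/-- The sum of cyclic products is affine in the `j`-th coordinate, with coefficient `≥ 1`. -/
lemma S_affine (m : ℕ) (hm : 1 ≤ m) (ρ : Fin m → ℝ) (hρ : ∀ i, 0 < ρ i) (j : Fin m) :
    ∃ A B : ℝ, 0 ≤ A ∧ 1 ≤ B ∧ ∀ x : ℝ,
      ∑ r ∈ Finset.Icc 1 m, cyclicP m r 1 (Function.update ρ j x) = A + B * x := by
  have h := fun r k => prod_update_affine m ρ (fun i => (hρ i).le) j r k
  choose a b ha hb hab using h
  refine ⟨∑ r ∈ Finset.Icc 1 m, ∑ k : Fin m, a r k,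
    ∑ r ∈ Finset.Icc 1 m, ∑ k : Fin m, b r k,
    Finset.sum_nonneg fun r _ => Finset.sum_nonneg fun k _ => ha r k, ?_, ?_⟩
  · -- b 1 j = 1
    have hidx : (⟨((j : ℕ) + 0) % m, Nat.mod_lt _ j.pos⟩ : Fin m) = j := by
      apply Fin.ext
      simp [Nat.mod_eq_of_lt j.isLt]
    have h1 : ∀ x : ℝ, x = a 1 j + b 1 j * x := by
      intro x
      have := hab 1 j hm x
      rwa [Finset.prod_range_one, hidx, Function.update_self] at this
    have ha0 : a 1 j = 0 := by have := h1 0; linarith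
    have hb1 : b 1 j = 1 := by have := h1 1; linarith
    calc (1 : ℝ) = b 1 j := hb1.symm
      _ ≤ ∑ k : Fin m, b 1 k :=
          Finset.single_le_sum (fun k _ => hb 1 k) (Finset.mem_univ j)
      _ ≤ ∑ r ∈ Finset.Icc 1 m, ∑ k : Fin m, b r k :=
          Finset.single_le_sum
            (fun r _ => Finset.sum_nonneg fun k _ => hb r k)
            (Finset.mem_Icc.mpr ⟨le_refl 1, hm⟩)
  · intro x
    have step : ∑ r ∈ Finset.Icc 1 m, cyclicP m r 1 (Function.update ρ j x)
        = ∑ r ∈ Finset.Icc 1 m, ∑ k : Fin m, (a r k + b r k * x) := by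
      refine Finset.sum_congr rfl fun r hr => ?_
      unfold cyclicP
      refine Finset.sum_congr rfl fun k _ => ?_
      have hrm : r ≤ m := (Finset.mem_Icc.mp hr).2
      simpa [Equiv.Perm.one_symm, Equiv.Perm.one_apply] using hab r k hrm x
    rw [step]
    calc ∑ r ∈ Finset.Icc 1 m, ∑ k : Fin m, (a r k + b r k * x)
        = ∑ r ∈ Finset.Icc 1 m, ((∑ k : Fin m, a r k) + (∑ k : Fin m, b r k) * x) :=
          Finset.sum_congr rfl fun r _ => by rw [Finset.sum_add_distrib, Finset.sum_mul]
      _ = _ := by rw [Finset.sum_add_distrib, Finset.sum_mul]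

set_option maxHeartbeats 800000 in
/-- The velocity is strictly increasing in each coordinate `pⱼ` on the region `γ < 1`. -/
theorem stmt_11 (m : ℕ) (hm : 1 ≤ m) (p p' : Fin m → ℝ)
    (hp : ∀ i, 0 < p i ∧ p i < 1) (hp' : ∀ i, 0 < p' i ∧ p' i < 1)
    (hγ : (∏ i, (1 - p i) / p i) < 1) (hγ' : (∏ i, (1 - p' i) / p' i) < 1)
    (j : Fin m) (hne : ∀ i, i ≠ j → p' i = p i) (hj : p j < p' j) :
    vel m p < vel m p' := by
  set ρ : Fin m → ℝ := fun i => (1 - p i) / p i with hρdef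
  set ρ' : Fin m → ℝ := fun i => (1 - p' i) / p' i with hρ'def
  have hρpos : ∀ i, 0 < ρ i := fun i => div_pos (by linarith [(hp i).2]) (hp i).1
  have hρ'pos : ∀ i, 0 < ρ' i := fun i => div_pos (by linarith [(hp' i).2]) (hp' i).1
  have hxy : ρ' j < ρ j := by
    simp only [hρdef, hρ'def]
    rw [div_lt_div_iff₀ (hp' j).1 (hp j).1]
    nlinarith [(hp j).1, (hp' j).1]
  have hupd : ρ' = Function.update ρ j (ρ' j) := by
    funext i
    by_cases hi : i = j
    · subst hi; simp
    · rw [Function.update_of_ne hi]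
      simp only [hρdef, hρ'def, hne i hi]
  obtain ⟨A, B, hA, hB, hAB⟩ := S_affine m hm ρ hρpos j
  set g : ℝ := ∏ i ∈ Finset.univ \ {j}, ρ i with hgdef
  have hg : 0 < g := Finset.prod_pos fun i _ => hρpos i
  have hγprod : ∀ x : ℝ, ∏ i, Function.update ρ j x i = x * g :=
    fun x => Finset.prod_update_of_mem (Finset.mem_univ j) ρ x
  have hvel : ∀ (q : Fin m → ℝ), (fun i => (1 - q i) / q i) = Function.update ρ j ((1 - q j)/(q j)) →
      vel m q = (1 - ((1 - q j)/(q j)) * g) /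
        (1 - ((1 - q j)/(q j)) * g + (2 / (m : ℝ)) * (A + B * ((1 - q j)/(q j)))) := by
    intro q hq
    unfold vel
    rw [hq, hγprod, hAB]
  have hρeq : (fun i => (1 - p i) / p i) = Function.update ρ j ((1 - p j)/(p j)) := by
    rw [show ((1 - p j)/(p j)) = ρ j from rfl, Function.update_eq_self]
  have hρ'eq : (fun i => (1 - p' i) / p' i) = Function.update ρ j ((1 - p' j)/(p' j)) := by
    rw [show ((1 - p' j)/(p' j)) = ρ' j from rfl, ← hupd]
  have hvp := hvel p hρeq
  have hvp' := hvel p' hρ'eq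
  set x : ℝ := (1 - p j) / p j
  set y : ℝ := (1 - p' j) / p' j
  have hxρ : x = ρ j := rfl
  have hyρ : y = ρ' j := rfl
  have hγ1 : x * g < 1 := by
    rw [hxρ, ← hγprod (ρ j), Function.update_eq_self]
    exact hγ
  have hγ2 : y * g < 1 := by
    rw [hyρ, ← hγprod (ρ' j), ← hupd]
    exact hγ'
  have hx0 : 0 < x := hρpos j
  have hy0 : 0 < y := hρ'pos j
  have hmR : (0 : ℝ) < m := by exact_mod_cast hm
  have hc : (0 : ℝ) < 2 / (m : ℝ) := by positivity
  have hBpos : (0 : ℝ) < B := by linarith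
  have hABx : 0 < A + B * x := by nlinarith [mul_pos hBpos hx0]
  have hABy : 0 < A + B * y := by nlinarith [mul_pos hBpos hy0]
  have hD1 : 0 < 1 - x * g + (2 / (m : ℝ)) * (A + B * x) := by
    nlinarith [mul_pos hc hABx]
  have hD2 : 0 < 1 - y * g + (2 / (m : ℝ)) * (A + B * y) := by
    nlinarith [mul_pos hc hABy]
  rw [hvp, hvp', div_lt_div_iff₀ hD1 hD2]
  have hkey : 0 < (2 / (m : ℝ)) * (B + g * A) * (x - y) := by
    have h1 : 0 < B + g * A := by nlinarith [mul_nonneg hg.le hA]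
    have h2 : 0 < x - y := by have : y < x := hxy; linarith
    exact mul_pos (mul_pos hc h1) h2
  nlinarith [hkey]
end

section
/- Multi-point Steinhaus theorem: if E ⊆ ℝ^d has positive Lebesgue measure, then for every n ∈ ℕ there exists δ > 0 such that for all y_1,...,y_n ∈ ℝ^d with |y_i| < δ for each i, the set E_{y_1,...,y_n} is non-empty, where E_y = E ∩ (E + y) and E_{y_1,...,y_{k+1}} = (E_{y_1,...,y_k})_{y_{k+1}}. -/
open MeasureTheory Pointwise

/-- Iterated Steinhaus intersections: `E_[] = E` and
`E_(y :: ys) = E_ys ∩ (E_ys + y)` (so the list `[y₁, …, yₙ]` is processed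
with `y₁` first via `foldl`). -/
def iterSet {d : ℕ} (E : Set (EuclideanSpace ℝ (Fin d)))
    (L : List (EuclideanSpace ℝ (Fin d))) : Set (EuclideanSpace ℝ (Fin d)) :=
  L.foldl (fun F y => F ∩ ((fun z => z + y) '' F)) E

variable {d : ℕ}

local notation "V" => EuclideanSpace ℝ (Fin d)

lemma img_inter (y : V) (A B : Set V) :
    (fun z => z + y) '' (A ∩ B) = ((fun z => z + y) '' A) ∩ ((fun z => z + y) '' B) :=
  Set.image_inter (add_left_injective y)

lemma img_comm (y z : V) (A : Set V) :
    (fun w => w + z) '' ((fun w => w + y) '' A) = (fun w => w + y) '' ((fun w => w + z) '' A) := by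
  rw [← Set.image_comp, ← Set.image_comp]
  apply Set.image_congr'
  intro x; simp [add_assoc, add_comm y z]

lemma iterSet_inter (L : List V) (A B : Set V) :
    iterSet (A ∩ B) L = iterSet A L ∩ iterSet B L := by
  induction L generalizing A B with
  | nil => rfl
  | cons y L ih =>
    show iterSet ((A ∩ B) ∩ _) L = iterSet (A ∩ _) L ∩ iterSet (B ∩ _) L
    rw [img_inter]
    rw [show (A ∩ B) ∩ ((fun z => z + y) '' A ∩ (fun z => z + y) '' B)
      = (A ∩ (fun z => z + y) '' A) ∩ (B ∩ (fun z => z + y) '' B) by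
        ext x; simp; tauto]
    exact ih _ _

lemma iterSet_image (L : List V) (y : V) (A : Set V) :
    iterSet ((fun z => z + y) '' A) L = (fun z => z + y) '' iterSet A L := by
  induction L generalizing A with
  | nil => rfl
  | cons z L ih =>
    have h1 : iterSet ((fun w => w + y) '' A) (z :: L)
        = iterSet ((fun w => w + y) '' (A ∩ ((fun w => w + z) '' A))) L := by
      show iterSet (((fun w => w + y) '' A) ∩ ((fun w => w + z) '' ((fun w => w + y) '' A))) L = _
      rw [img_comm, ← img_inter]
    rw [h1, ih]
    rfl

lemma iterSet_cons (y : V) (L : List V) (A : Set V) :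
    iterSet A (y :: L) = iterSet A L ∩ ((fun z => z + y) '' iterSet A L) := by
  show iterSet (A ∩ _) L = _
  rw [iterSet_inter, iterSet_image]

lemma iterSet_subset (L : List V) (A : Set V) : iterSet A L ⊆ A := by
  induction L generalizing A with
  | nil => exact subset_rfl
  | cons y L ih =>
    rw [iterSet_cons]
    exact (Set.inter_subset_left).trans (ih A)

lemma iterSet_mono (L : List V) {A B : Set V} (h : A ⊆ B) : iterSet A L ⊆ iterSet B L := by
  induction L generalizing A B with
  | nil => exact h
  | cons y L ih =>
    rw [iterSet_cons, iterSet_cons]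
    exact Set.inter_subset_inter (ih h) (Set.image_mono (ih h))

lemma img_eq_vadd (y : V) (A : Set V) : (fun z => z + y) '' A = y +ᵥ A := by
  rw [← Set.image_vadd]
  exact Set.image_congr' (fun x => add_comm x y)

lemma vol_img (y : V) (A : Set V) : volume ((fun z => z + y) '' A) = volume A := by
  rw [img_eq_vadd]
  exact measure_vadd (μ := volume) y A

lemma img_measurable (y : V) {A : Set V} (hA : MeasurableSet A) :
    MeasurableSet ((fun z => z + y) '' A) := by
  have : (fun z : V => z + y) '' A = (fun z : V => z - y) ⁻¹' A := by
    ext x; simp [Set.mem_image, sub_eq_iff_eq_add, eq_comm, sub_eq_add_neg]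
  rw [this]
  exact (measurable_sub_const y) hA

lemma iterSet_measurable (L : List V) {A : Set V} (hA : MeasurableSet A) :
    MeasurableSet (iterSet A L) := by
  induction L generalizing A with
  | nil => exact hA
  | cons y L ih =>
    rw [iterSet_cons]
    exact (ih hA).inter (img_measurable y (ih hA))

lemma key_bound {K : Set V} (hK : MeasurableSet K) {ε : ENNReal} {δ : ℝ}
    (h : ∀ y : V, ‖y‖ < δ → volume (K \ ((fun z => z + y) '' K)) < ε)
    (L : List V) (hL : ∀ y ∈ L, ‖y‖ < δ) :
    volume (K \ iterSet K L) ≤ ((2 ^ L.length - 1 : ℕ) : ENNReal) * ε := by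
  induction L with
  | nil => simp [iterSet]
  | cons y L ih =>
    have hy : ‖y‖ < δ := hL y List.mem_cons_self
    have hL' : ∀ z ∈ L, ‖z‖ < δ := fun z hz => hL z (List.mem_cons_of_mem y hz)
    set G := iterSet K L with hG
    have hsub : K \ iterSet K (y :: L)
        ⊆ (K \ G) ∪ ((K \ ((fun z => z + y) '' K)) ∪ (((fun z => z + y) '' K) \ ((fun z => z + y) '' G))) := by
      rw [iterSet_cons]
      intro x hx
      simp only [Set.mem_diff, Set.mem_inter_iff, not_and] at hx
      by_cases h1 : x ∈ G
      · right
        have h2 : x ∉ (fun z => z + y) '' G := fun hc => (hx.2 h1) hc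
        by_cases h3 : x ∈ (fun z => z + y) '' K
        · exact Or.inr ⟨h3, h2⟩
        · exact Or.inl ⟨hx.1, h3⟩
      · exact Or.inl ⟨hx.1, h1⟩
    have himg : ((fun z => z + y) '' K) \ ((fun z => z + y) '' G)
        = (fun z => z + y) '' (K \ G) := (Set.image_diff (add_left_injective y) K G).symm
    have hmeas : volume (K \ iterSet K (y :: L))
        ≤ volume (K \ G) + (volume (K \ ((fun z => z + y) '' K)) + volume (K \ G)) := by
      refine (measure_mono hsub).trans ?_
      refine (measure_union_le _ _).trans ?_
      refine add_le_add le_rfl ?_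
      refine (measure_union_le _ _).trans ?_
      refine add_le_add le_rfl ?_
      rw [himg, vol_img]
    have hnat : (2 ^ (y :: L).length - 1 : ℕ) = (2 ^ L.length - 1) + 1 + (2 ^ L.length - 1) := by
      have h1 : 1 ≤ 2 ^ L.length := Nat.one_le_two_pow
      simp only [List.length_cons]
      omega
    calc volume (K \ iterSet K (y :: L))
        ≤ volume (K \ G) + (volume (K \ ((fun z => z + y) '' K)) + volume (K \ G)) := hmeas
      _ ≤ ((2 ^ L.length - 1 : ℕ) : ENNReal) * ε + (1 * ε + ((2 ^ L.length - 1 : ℕ) : ENNReal) * ε) := by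
          gcongr
          · exact ih hL'
          · rw [one_mul]; exact (h y hy).le
          · exact ih hL'
      _ = ((2 ^ (y :: L).length - 1 : ℕ) : ENNReal) * ε := by
          rw [hnat]; push_cast; ring

/-- Multi-point Steinhaus theorem: if `E ⊆ ℝ^d` has positive Lebesgue measure then for
every `n` there is `δ > 0` such that whenever `‖yᵢ‖ < δ` for `i = 1,…,n`, the set
`E_{y₁,…,yₙ}` is non-empty. -/
theorem stmt_14 (d n : ℕ) (E : Set (EuclideanSpace ℝ (Fin d)))
    (hE : MeasurableSet E) (hpos : 0 < volume E) :
    ∃ δ > (0 : ℝ), ∀ L : List (EuclideanSpace ℝ (Fin d)), L.length = n →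
      (∀ y ∈ L, ‖y‖ < δ) → (iterSet E L).Nonempty := by
  -- find a positive finite measure piece
  have hcover : E = ⋃ m : ℕ, E ∩ Metric.ball 0 (m + 1) := by
    ext x
    simp only [Set.mem_iUnion, Set.mem_inter_iff, Metric.mem_ball, dist_zero_right]
    constructor
    · intro hx
      obtain ⟨m, hm⟩ := exists_nat_gt ‖x‖
      exact ⟨m, hx, by linarith⟩
    · rintro ⟨m, hx, -⟩; exact hx
  have hex : ∃ m : ℕ, 0 < volume (E ∩ Metric.ball 0 (m + 1)) := by
    by_contra hc
    push_neg at hc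
    simp only [nonpos_iff_eq_zero] at hc
    have : volume E = 0 := by
      rw [hcover]
      exact le_antisymm ((measure_iUnion_le _).trans (by simp [hc])) zero_le
    exact absurd this hpos.ne'
  obtain ⟨m, hm⟩ := hex
  set A : Set (EuclideanSpace ℝ (Fin d)) := E ∩ Metric.ball 0 (m + 1) with hA
  have hAm : MeasurableSet A := hE.inter measurableSet_ball
  have hAfin : volume A ≠ ⊤ :=
    ((measure_mono Set.inter_subset_right).trans_lt measure_ball_lt_top).ne
  -- compact closed subset of positive measure
  obtain ⟨K, hKA, hKcomp, hKclosed, hKdiff⟩ :=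
    hAm.exists_isCompact_isClosed_diff_lt hAfin hm.ne'
  have hKmeas : MeasurableSet K := hKclosed.measurableSet
  have hKpos : 0 < volume K := by
    by_contra hc
    push_neg at hc
    simp only [nonpos_iff_eq_zero] at hc
    have : volume A ≤ volume (A \ K) + volume K :=
      (measure_mono (by intro x hx; by_cases h : x ∈ K <;> simp [hx, h])).trans
        (measure_union_le _ _)
    rw [hc, add_zero] at this
    exact absurd (this.trans_lt hKdiff) (lt_irrefl _)
  have hKfin : volume K ≠ ⊤ := hKcomp.measure_lt_top.ne
  -- small epsilon
  set ε : ENNReal := volume K / 2 ^ (n + 1) with hε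
  have hεpos : ε ≠ 0 := by
    simp only [hε, ne_eq, ENNReal.div_eq_zero_iff]
    push_neg
    exact ⟨hKpos.ne', by simp⟩
  have hev := eventually_nhds_zero_measure_vadd_sdiff_lt (μ := volume) hKcomp hKclosed hεpos
  rw [Metric.eventually_nhds_iff] at hev
  obtain ⟨δ, hδpos, hδ⟩ := hev
  refine ⟨δ, hδpos, fun L hlen hLnorm => ?_⟩
  -- translate bound: for ‖y‖ < δ, volume (K \ (K+y)) < ε
  have htrans : ∀ y : EuclideanSpace ℝ (Fin d), ‖y‖ < δ →
      volume (K \ ((fun z => z + y) '' K)) < ε := by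
    intro y hy
    have h1 : dist (-y) 0 < δ := by simpa [dist_zero_right] using hy
    have h2 := hδ h1
    have h3 : (-y) +ᵥ (K \ (y +ᵥ K)) = ((-y) +ᵥ K) \ K := by
      rw [Set.vadd_set_sdiff]
      congr 1
      rw [vadd_vadd, neg_add_cancel, zero_vadd]
    have h4 : volume (K \ (y +ᵥ K)) = volume (((-y) +ᵥ K) \ K) := by
      rw [← h3]
      exact (measure_vadd (μ := volume) (-y) _).symm
    rw [img_eq_vadd, h4]
    exact h2
  have hbound := key_bound hKmeas htrans L hLnorm
  rw [hlen] at hbound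
  -- (2^n - 1) * ε < volume K
  have hlt : ((2 ^ n - 1 : ℕ) : ENNReal) * ε < volume K := by
    have h1 : ((2 ^ n - 1 : ℕ) : ENNReal) * ε ≤ (2 ^ n : ENNReal) * ε := by
      gcongr
      calc ((2 ^ n - 1 : ℕ) : ENNReal) ≤ ((2 ^ n : ℕ) : ENNReal) := by exact_mod_cast Nat.sub_le _ _
        _ = (2 : ENNReal) ^ n := by push_cast; ring
    have h2 : (2 : ENNReal) ^ n * ε = volume K / 2 := by
      rw [hε, pow_succ, ← mul_div_assoc]
      exact ENNReal.mul_div_mul_left _ _ (by positivity) (by simp)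
    have h3 : volume K / 2 < volume K := ENNReal.half_lt_self hKpos.ne' hKfin
    exact h1.trans_lt (h2 ▸ h3)
  have hGne : (iterSet K L).Nonempty := by
    rw [Set.nonempty_iff_ne_empty]
    intro hG0
    rw [hG0, Set.diff_empty] at hbound
    exact absurd (hbound.trans_lt hlt) (lt_irrefl _)
  exact hGne.mono (iterSet_mono L (hKA.trans Set.inter_subset_left))
end

section
/- For decreasing positive reals a_0 ≥ ... ≥ a_{m-1} > 0, the sum of squared cyclic differences L(b) = ∑_{i=0}^{m-1} (b_{i+1} - b_i)^2 (indices mod m) over cyclic arrangements b of the multiset {a_0,...,a_{m-1}} is minimised by the circular symmetric ordering (a_0, a_2, a_4, ..., a_5, a_3, a_1); equivalently, since ∑ b_i^2 is fixed, this ordering maximises the adjacent pair sum ∑_i b_i b_{i+1}. Formally: L applied to the greedy arrangement is ≤ L applied to any permuted arrangement. -/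
/-- The sum of squared cyclic differences
`L(σ; a) = ∑_{k=0}^{m-1} (a(σ⁻¹((k+1) mod m)) - a(σ⁻¹(k)))²`. -/
noncomputable def cyclicL (m : ℕ) (σ : Equiv.Perm (Fin m)) (a : Fin m → ℝ) : ℝ :=
  ∑ k : Fin m,
    (a (σ.symm ⟨((k : ℕ) + 1) % m, Nat.mod_lt _ k.pos⟩) - a (σ.symm k)) ^ 2

open Finset

open Fin.NatCast in
lemma const_of_no_change {m : ℕ} [NeZero m] (f : Fin m → Bool)
    (h : ∀ k, f (k + 1) = f k) : ∀ k, f k = f 0 := by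
  have key : ∀ t : ℕ, f ((t : ℕ) : Fin m) = f 0 := by
    intro t
    induction t with
    | zero => norm_num
    | succ n ih =>
      have : ((n + 1 : ℕ) : Fin m) = ((n : ℕ) : Fin m) + 1 := by push_cast; ring
      rw [this, h, ih]
  intro k
  have := key (k : ℕ)
  rwa [Fin.cast_val_eq_self] at this

lemma two_le_card_changes {m : ℕ} [NeZero m] (f : Fin m → Bool) (k1 k2 : Fin m)
    (h1 : f k1 = true) (h2 : f k2 = false) :
    2 ≤ (Finset.univ.filter (fun k => f k ≠ f (k + 1))).card := by
  set C := Finset.univ.filter (fun k => f k ≠ f (k + 1)) with hC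
  have hne : C.Nonempty := by
    by_contra h
    rw [Finset.not_nonempty_iff_eq_empty, hC, Finset.filter_eq_empty_iff] at h
    have hconst : ∀ k, f (k + 1) = f k := by
      intro k
      have := h (Finset.mem_univ k)
      simp only [ne_eq, not_not] at this
      exact this.symm
    have e1 := const_of_no_change f hconst k1
    have e2 := const_of_no_change f hconst k2
    rw [h1] at e1; rw [h2] at e2
    rw [← e1] at e2; simp at e2
  have heven : (2 : ℕ) ∣ C.card := by
    have hcard : C.card = ∑ k : Fin m, if f k ≠ f (k + 1) then 1 else 0 := by
      rw [hC, Finset.card_filter]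
    have hcast : ((C.card : ℕ) : ZMod 2) = 0 := by
      rw [hcard]
      push_cast
      have hterm : ∀ k : Fin m, (if f k ≠ f (k + 1) then (1 : ZMod 2) else 0)
          = (if f k then (1 : ZMod 2) else 0) + (if f (k + 1) then (1 : ZMod 2) else 0) := by
        intro k
        cases hfk : f k <;> cases hfk1 : f (k + 1) <;> simp [hfk, hfk1] <;> decide
      rw [Finset.sum_congr rfl (fun k _ => hterm k), Finset.sum_add_distrib]
      have hre : ∑ k : Fin m, (if f (k + 1) then (1 : ZMod 2) else 0)
          = ∑ k : Fin m, (if f k then (1 : ZMod 2) else 0) :=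
        Equiv.sum_comp (Equiv.addRight (1 : Fin m)) (fun k => if f k then (1 : ZMod 2) else 0)
      rw [hre]
      exact CharTwo.add_self_eq_zero _
    exact (ZMod.natCast_eq_zero_iff _ 2).mp hcast
  have hpos : 0 < C.card := Finset.card_pos.mpr hne
  exact Nat.le_of_dvd hpos heven

noncomputable def AA (m : ℕ) (a : Fin m → ℝ) : ℕ → ℝ :=
  fun n => if h : n < m then a ⟨n, h⟩ else 0

noncomputable def ee (m : ℕ) (a : Fin m → ℝ) : ℕ → ℝ :=
  fun j => AA m a j - AA m a (j + 1)

lemma ee_nonneg {m : ℕ} {a : Fin m → ℝ} (hdec : Antitone a) {j : ℕ} (hj : j + 1 < m) :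
    0 ≤ ee m a j := by
  have hj' : j < m := by omega
  have : a ⟨j + 1, hj⟩ ≤ a ⟨j, hj'⟩ := hdec (by simp [Fin.mk_le_mk])
  simp only [ee, AA, dif_pos hj, dif_pos hj']
  linarith

lemma ee_telescope {m : ℕ} (a : Fin m → ℝ) {p q : ℕ} (h : p ≤ q) :
    ∑ j ∈ Finset.Ico p q, ee m a j = AA m a p - AA m a q := by
  induction q, h using Nat.le_induction with
  | base => simp
  | succ q hq ih =>
    rw [Finset.sum_Ico_succ_top hq, ih]
    simp [ee]

lemma step_lb {m : ℕ} {a : Fin m → ℝ} (hdec : Antitone a) {p q : ℕ} (h : p ≤ q) (hq : q < m) :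
    ∑ j ∈ Finset.Ico p q, (ee m a j) ^ 2
      + 2 * ∑ j ∈ Finset.Ico p (q - 1), ee m a j * ee m a (j + 1)
      ≤ (AA m a p - AA m a q) ^ 2 := by
  induction q, h using Nat.le_induction with
  | base => simp
  | succ q hq' ih =>
    have hqm : q < m := by omega
    have ih' := ih hqm
    have heq : AA m a p - AA m a (q + 1) = (AA m a p - AA m a q) + ee m a q := by
      simp [ee]
    have heq2 : 0 ≤ ee m a q := ee_nonneg hdec (by omega)
    rcases Nat.eq_or_lt_of_le hq' with rfl | hpq
    · -- p = q
      simp only [Finset.Ico_self, Finset.sum_empty] at *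
      rw [show p + 1 - 1 = p by omega]
      rw [Finset.sum_Ico_succ_top (le_refl p)]
      simp only [Finset.Ico_self, Finset.sum_empty, zero_add, mul_zero, add_zero]
      rw [heq]
      have h0 : AA m a p - AA m a p = 0 := by ring
      rw [h0, zero_add]
      try simp [ee]
      try nlinarith
    · -- p < q
      have hq1 : 1 ≤ q := by omega
      have hsum : AA m a p - AA m a q = ∑ j ∈ Finset.Ico p q, ee m a j :=
        (ee_telescope a hq').symm
      have hXq : ee m a (q - 1) ≤ AA m a p - AA m a q := by
        rw [hsum]
        apply Finset.single_le_sum (f := fun j => ee m a j)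
        · intro i hi
          rw [Finset.mem_Ico] at hi
          exact ee_nonneg hdec (by omega)
        · rw [Finset.mem_Ico]; omega
      have hsplit : ∑ j ∈ Finset.Ico p q, ee m a j * ee m a (j + 1)
          = ∑ j ∈ Finset.Ico p (q - 1), ee m a j * ee m a (j + 1)
            + ee m a (q - 1) * ee m a (q - 1 + 1) := by
        conv_lhs => rw [show q = q - 1 + 1 by omega]
        rw [Finset.sum_Ico_succ_top (by omega : p ≤ q - 1)]
      rw [Finset.sum_Ico_succ_top hq', show q + 1 - 1 = q by omega, hsplit, heq,
        show q - 1 + 1 = q by omega]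
      have key : ee m a (q - 1) * ee m a q ≤ (AA m a p - AA m a q) * ee m a q :=
        mul_le_mul_of_nonneg_right hXq heq2
      nlinarith [ih', key]

def ww {m : ℕ} (σ : Equiv.Perm (Fin m)) : Fin m → ℕ := fun k => ((σ.symm k : Fin m) : ℕ)

lemma ww_lt {m : ℕ} (σ : Equiv.Perm (Fin m)) (k : Fin m) : ww σ k < m := (σ.symm k).isLt

lemma ww_eq_iff {m : ℕ} (σ : Equiv.Perm (Fin m)) {j : ℕ} (hj : j < m) {k : Fin m} :
    ww σ k = j ↔ k = σ ⟨j, hj⟩ := by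
  rw [ww, show ((σ.symm k : Fin m) : ℕ) = j ↔ σ.symm k = ⟨j, hj⟩ from by
    rw [Fin.ext_iff]]
  exact Equiv.symm_apply_eq σ

lemma count1 {m : ℕ} [NeZero m] (hm : 2 ≤ m) (σ : Equiv.Perm (Fin m)) {j : ℕ} (hj : j + 1 < m) :
    2 ≤ (Finset.univ.filter fun k : Fin m =>
      j ∈ Finset.Ico (min (ww σ k) (ww σ (k + 1))) (max (ww σ k) (ww σ (k + 1)))).card := by
  have hfilter : (Finset.univ.filter fun k : Fin m =>
      j ∈ Finset.Ico (min (ww σ k) (ww σ (k + 1))) (max (ww σ k) (ww σ (k + 1))))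
      = Finset.univ.filter fun k : Fin m =>
        (decide (ww σ k ≤ j)) ≠ (decide (ww σ (k + 1) ≤ j)) := by
    apply Finset.filter_congr; intro k _
    simp only [Finset.mem_Ico, ne_eq, decide_eq_decide]
    by_cases h1 : ww σ k ≤ j <;> by_cases h2 : ww σ (k + 1) ≤ j <;> simp [h1, h2] <;> omega
  rw [hfilter]
  apply two_le_card_changes _ (σ ⟨j, by omega⟩) (σ ⟨m - 1, by omega⟩)
  · simp [ww]
  · simp only [ww, Equiv.symm_apply_apply, decide_eq_false_iff_not]
    omega

lemma cross_exists {m : ℕ} [NeZero m] (hm : 2 ≤ m) (σ : Equiv.Perm (Fin m)) {j : ℕ} (hj : j + 1 < m) :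
    ∃ k : Fin m, min (ww σ k) (ww σ (k + 1)) ≤ j ∧ j + 1 ≤ max (ww σ k) (ww σ (k + 1)) := by
  have h := count1 hm σ hj
  have hpos : 0 < (Finset.univ.filter fun k : Fin m =>
      j ∈ Finset.Ico (min (ww σ k) (ww σ (k + 1))) (max (ww σ k) (ww σ (k + 1)))).card := by omega
  obtain ⟨k, hk⟩ := Finset.card_pos.mp hpos
  rw [Finset.mem_filter, Finset.mem_Ico] at hk
  exact ⟨k, hk.2.1, hk.2.2⟩

lemma count2 {m : ℕ} [NeZero m] (hm : 2 ≤ m) (σ : Equiv.Perm (Fin m)) {j : ℕ} (hj : j + 2 < m) :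
    ∃ k : Fin m, min (ww σ k) (ww σ (k + 1)) ≤ j ∧ j + 2 ≤ max (ww σ k) (ww σ (k + 1)) := by
  by_contra hno
  push_neg at hno
  set s : Fin m := σ ⟨j + 1, by omega⟩ with hs
  have hws : ww σ s = j + 1 := by simp [ww, hs]
  -- a crosser of gap j+1
  obtain ⟨k2, hk2min, hk2max⟩ := cross_exists hm σ (show (j + 1) + 1 < m by omega)
  have hk2min' : ¬ (min (ww σ k2) (ww σ (k2 + 1)) ≤ j) := by
    intro h
    exact absurd (hno k2 h) (by omega)
  have hcases : ww σ k2 = j + 1 ∨ ww σ (k2 + 1) = j + 1 := by omega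
  -- the set of gap-j crossers
  have hCj := count1 hm σ (show j + 1 < m by omega)
  set Cj := (Finset.univ.filter fun k : Fin m =>
      j ∈ Finset.Ico (min (ww σ k) (ww σ (k + 1))) (max (ww σ k) (ww σ (k + 1)))) with hCjdef
  have hmaxCj : ∀ k ∈ Cj, min (ww σ k) (ww σ (k + 1)) ≤ j ∧
      (ww σ k = j + 1 ∨ ww σ (k + 1) = j + 1) := by
    intro k hk
    rw [hCjdef, Finset.mem_filter, Finset.mem_Ico] at hk
    have h1 := hk.2.1
    have h2 := hk.2.2
    have h3 := hno k h1
    exact ⟨h1, by omega⟩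
  rcases hcases with hA | hB
  · -- k2 = s, w (s+1) ≥ j+2
    have hk2s : k2 = s := (ww_eq_iff σ (by omega)).mp hA
    have hs1 : j + 2 ≤ ww σ (s + 1) := by
      rw [hk2s] at hk2max hA
      omega
    have hsub : Cj ⊆ {s - 1} := by
      intro k hk
      obtain ⟨hmin, hor⟩ := hmaxCj k hk
      rcases hor with h | h
      · exfalso
        have : k = s := (ww_eq_iff σ (by omega)).mp h
        rw [this] at hmin
        omega
      · have hk1 : k + 1 = s := (ww_eq_iff σ (by omega)).mp h
        simp only [Finset.mem_singleton]
        exact eq_sub_of_add_eq hk1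
    have := Finset.card_le_card hsub
    simp at this
    omega
  · -- k2 + 1 = s, w (s-1) ≥ j+2 where k2 = s - 1
    have hk2s : k2 + 1 = s := (ww_eq_iff σ (by omega)).mp hB
    have hk2eq : k2 = s - 1 := eq_sub_of_add_eq hk2s
    have hs1 : j + 2 ≤ ww σ (s - 1) := by
      rw [hk2eq, sub_add_cancel, hws] at hk2max
      omega
    have hsub : Cj ⊆ {s} := by
      intro k hk
      obtain ⟨hmin, hor⟩ := hmaxCj k hk
      rcases hor with h | h
      · have : k = s := (ww_eq_iff σ (by omega)).mp h
        simp [this]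
      · exfalso
        have hks : k + 1 = s := (ww_eq_iff σ (by omega)).mp h
        have hk : k = s - 1 := eq_sub_of_add_eq hks
        rw [hk, sub_add_cancel, hws] at hmin
        omega
    have := Finset.card_le_card hsub
    simp at this
    omega

lemma swap_sum {m N : ℕ} (s : Fin m → Finset ℕ) (hs : ∀ k, s k ⊆ Finset.range N) (F : ℕ → ℝ) :
    ∑ k : Fin m, ∑ j ∈ s k, F j
      = ∑ j ∈ Finset.range N, ((Finset.univ.filter fun k => j ∈ s k).card : ℝ) * F j := by
  have h1 : ∀ k, ∑ j ∈ s k, F j = ∑ j ∈ Finset.range N, if j ∈ s k then F j else 0 := by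
    intro k
    rw [Finset.sum_ite_mem, Finset.inter_eq_right.mpr (hs k)]
  simp_rw [h1]
  rw [Finset.sum_comm]
  apply Finset.sum_congr rfl
  intro j _
  rw [← Finset.sum_filter, Finset.sum_const, nsmul_eq_mul]

lemma succ_mk_eq_add_one {m : ℕ} [NeZero m] (hm : 2 ≤ m) (k : Fin m) :
    (⟨((k : ℕ) + 1) % m, Nat.mod_lt _ k.pos⟩ : Fin m) = k + 1 := by
  apply Fin.ext
  rw [Fin.val_add, Fin.val_one', Nat.mod_eq_of_lt (show 1 < m by omega)]

lemma cyclicL_eq {m : ℕ} [NeZero m] (hm : 2 ≤ m) (σ : Equiv.Perm (Fin m)) (a : Fin m → ℝ) :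
    cyclicL m σ a = ∑ k : Fin m, (AA m a (ww σ (k + 1)) - AA m a (ww σ k)) ^ 2 := by
  unfold cyclicL
  apply Finset.sum_congr rfl
  intro k _
  rw [succ_mk_eq_add_one hm]
  have h1 : AA m a (ww σ (k + 1)) = a (σ.symm (k + 1)) := by
    simp [AA, ww, Fin.isLt]
  have h2 : AA m a (ww σ k) = a (σ.symm k) := by
    simp [AA, ww, Fin.isLt]
  rw [h1, h2]

lemma sigma_lb {m : ℕ} [NeZero m] (hm : 2 ≤ m) {a : Fin m → ℝ} (hdec : Antitone a)
    (σ : Equiv.Perm (Fin m)) :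
    2 * ∑ j ∈ Finset.range (m - 1), (ee m a j) ^ 2
      + 2 * ∑ j ∈ Finset.range (m - 2), ee m a j * ee m a (j + 1)
      ≤ cyclicL m σ a := by
  rw [cyclicL_eq hm]
  -- per step lower bound
  have hstep : ∀ k : Fin m,
      ∑ j ∈ Finset.Ico (min (ww σ k) (ww σ (k + 1))) (max (ww σ k) (ww σ (k + 1))), (ee m a j) ^ 2
      + 2 * ∑ j ∈ Finset.Ico (min (ww σ k) (ww σ (k + 1))) (max (ww σ k) (ww σ (k + 1)) - 1),
          ee m a j * ee m a (j + 1)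
      ≤ (AA m a (ww σ (k + 1)) - AA m a (ww σ k)) ^ 2 := by
    intro k
    have hmaxlt : max (ww σ k) (ww σ (k + 1)) < m := by
      have := ww_lt σ k; have := ww_lt σ (k + 1); omega
    have hsq : (AA m a (ww σ (k + 1)) - AA m a (ww σ k)) ^ 2
        = (AA m a (min (ww σ k) (ww σ (k + 1))) - AA m a (max (ww σ k) (ww σ (k + 1)))) ^ 2 := by
      rcases le_total (ww σ k) (ww σ (k + 1)) with h | h
      · rw [min_eq_left h, max_eq_right h]; ring
      · rw [min_eq_right h, max_eq_left h]
    rw [hsq]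
    exact step_lb hdec (min_le_max) hmaxlt
  have hsum : ∑ k : Fin m,
      (∑ j ∈ Finset.Ico (min (ww σ k) (ww σ (k + 1))) (max (ww σ k) (ww σ (k + 1))), (ee m a j) ^ 2
      + 2 * ∑ j ∈ Finset.Ico (min (ww σ k) (ww σ (k + 1))) (max (ww σ k) (ww σ (k + 1)) - 1),
          ee m a j * ee m a (j + 1))
      ≤ ∑ k : Fin m, (AA m a (ww σ (k + 1)) - AA m a (ww σ k)) ^ 2 :=
    Finset.sum_le_sum fun k _ => hstep k
  refine le_trans ?_ hsum
  rw [Finset.sum_add_distrib, ← Finset.mul_sum]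
  -- swap both double sums
  rw [swap_sum (N := m - 1)
      (fun k => Finset.Ico (min (ww σ k) (ww σ (k + 1))) (max (ww σ k) (ww σ (k + 1))))
      (fun k => by
        intro j hj
        rw [Finset.mem_Ico] at hj
        rw [Finset.mem_range]
        have := ww_lt σ k; have := ww_lt σ (k + 1)
        omega) (fun j => (ee m a j) ^ 2)]
  rw [swap_sum (N := m - 2)
      (fun k => Finset.Ico (min (ww σ k) (ww σ (k + 1)))
        (max (ww σ k) (ww σ (k + 1)) - 1))
      (fun k => by
        intro j hj
        rw [Finset.mem_Ico] at hj
        rw [Finset.mem_range]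
        have := ww_lt σ k; have := ww_lt σ (k + 1)
        omega) (fun j => ee m a j * ee m a (j + 1))]
  have hpart1 : 2 * ∑ j ∈ Finset.range (m - 1), (ee m a j) ^ 2
      ≤ ∑ j ∈ Finset.range (m - 1),
        ((Finset.univ.filter fun k : Fin m =>
          j ∈ Finset.Ico (min (ww σ k) (ww σ (k + 1))) (max (ww σ k) (ww σ (k + 1)))).card : ℝ)
          * (ee m a j) ^ 2 := by
    rw [Finset.mul_sum]
    apply Finset.sum_le_sum
    intro j hj
    rw [Finset.mem_range] at hj
    have hc := count1 hm σ (show j + 1 < m by omega)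
    have : (2 : ℝ) ≤ ((Finset.univ.filter fun k : Fin m =>
        j ∈ Finset.Ico (min (ww σ k) (ww σ (k + 1))) (max (ww σ k) (ww σ (k + 1)))).card : ℝ) := by
      exact_mod_cast hc
    exact mul_le_mul_of_nonneg_right this (sq_nonneg _)
  have hpart2 : 2 * ∑ j ∈ Finset.range (m - 2), ee m a j * ee m a (j + 1)
      ≤ 2 * ∑ j ∈ Finset.range (m - 2),
        ((Finset.univ.filter fun k : Fin m =>
          j ∈ Finset.Ico (min (ww σ k) (ww σ (k + 1)))
            (max (ww σ k) (ww σ (k + 1)) - 1)).card : ℝ)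
          * (ee m a j * ee m a (j + 1)) := by
    apply mul_le_mul_of_nonneg_left _ (by norm_num)
    apply Finset.sum_le_sum
    intro j hj
    rw [Finset.mem_range] at hj
    have hnn : 0 ≤ ee m a j * ee m a (j + 1) :=
      mul_nonneg (ee_nonneg hdec (by omega)) (ee_nonneg hdec (by omega))
    obtain ⟨k0, hk0min, hk0max⟩ := count2 hm σ (show j + 2 < m by omega)
    have hone : 1 ≤ ((Finset.univ.filter fun k : Fin m =>
        j ∈ Finset.Ico (min (ww σ k) (ww σ (k + 1)))
          (max (ww σ k) (ww σ (k + 1)) - 1)).card : ℝ) := by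
      have : (Finset.univ.filter fun k : Fin m =>
          j ∈ Finset.Ico (min (ww σ k) (ww σ (k + 1)))
            (max (ww σ k) (ww σ (k + 1)) - 1)).Nonempty := by
        refine ⟨k0, ?_⟩
        rw [Finset.mem_filter, Finset.mem_Ico]
        exact ⟨Finset.mem_univ _, hk0min, by omega⟩
      have := Finset.card_pos.mpr this
      exact_mod_cast this
    nlinarith [hnn, hone]
  calc 2 * ∑ j ∈ Finset.range (m - 1), (ee m a j) ^ 2
      + 2 * ∑ j ∈ Finset.range (m - 2), ee m a j * ee m a (j + 1) ≤ _ := by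
        exact add_le_add hpart1 hpart2

def GG (m : ℕ) : ℕ → ℕ := fun k => if 2 * k < m then 2 * k else 2 * (m - 1 - k) + 1

noncomputable def TT (m : ℕ) (a : Fin m → ℝ) : ℕ → ℝ := fun j =>
  if j = m - 1 then (ee m a 0) ^ 2
  else if j = m - 2 then (ee m a (m - 2)) ^ 2
  else (ee m a j + ee m a (j + 1)) ^ 2

def phi (m : ℕ) : ℕ → ℕ := fun k =>
  if k = m - 1 then m - 1
  else if 2 * (k + 1) < m then 2 * k
  else if 2 * k < m then m - 2
  else 2 * (m - 2 - k) + 1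

def psi (m : ℕ) : ℕ → ℕ := fun j =>
  if j = m - 1 then m - 1
  else if j = m - 2 then (m - 1) / 2
  else if j % 2 = 0 then j / 2
  else m - 1 - (j + 1) / 2

lemma greedy_val {m : ℕ} (hm : 2 ≤ m) (g : Equiv.Perm (Fin m)) (hg : IsGreedy g)
    (k : Fin m) : ((g.symm k : Fin m) : ℕ) = GG m (k : ℕ) := by
  by_cases h1 : (k : ℕ) < m / 2
  · rw [(hg k).1 h1]
    simp only [GG]
    split_ifs <;> omega
  · by_cases h2 : m - 1 - (k : ℕ) < m / 2
    · rw [(hg k).2 h2]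
      simp only [GG]
      split_ifs <;> omega
    · have hk : 2 * (k : ℕ) = m - 1 := by omega
      have hGG : GG m (k : ℕ) = m - 1 := by simp only [GG]; split_ifs <;> omega
      rw [hGG]
      obtain ⟨i, hi⟩ : ∃ i : Fin m, g.symm i = ⟨m - 1, by omega⟩ :=
        ⟨g ⟨m - 1, by omega⟩, Equiv.symm_apply_apply g _⟩
      have hival : ((g.symm i : Fin m) : ℕ) = m - 1 := by rw [hi]
      have hik : i = k := by
        by_cases hi1 : (i : ℕ) < m / 2
        · have := (hg i).1 hi1; omega
        · by_cases hi2 : m - 1 - (i : ℕ) < m / 2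
          · have := (hg i).2 hi2; omega
          · apply Fin.ext; omega
      rw [← hik, hival]

lemma step_eq {m : ℕ} (hm : 2 ≤ m) (a : Fin m → ℝ) {t : ℕ} (ht : t < m) :
    (AA m a (GG m ((t + 1) % m)) - AA m a (GG m t)) ^ 2 = TT m a (phi m t) := by
  by_cases h1 : t = m - 1
  · subst h1
    have hmod : (m - 1 + 1) % m = 0 := by
      rw [show m - 1 + 1 = m by omega, Nat.mod_self]
    have hg0 : GG m 0 = 0 := by simp only [GG]; split_ifs <;> omega
    have hg1 : GG m (m - 1) = 1 := by simp only [GG]; split_ifs <;> omega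
    have hphi : phi m (m - 1) = m - 1 := by simp only [phi]; split_ifs <;> omega
    rw [hmod, hg0, hg1, hphi]
    have hTT : TT m a (m - 1) = (ee m a 0) ^ 2 := by simp only [TT]; simp
    rw [hTT]
    simp only [ee]
    try norm_num
  · have hmod : (t + 1) % m = t + 1 := Nat.mod_eq_of_lt (by omega)
    rw [hmod]
    by_cases h2 : 2 * (t + 1) < m
    · -- both low
      have hgt : GG m t = 2 * t := by simp only [GG]; split_ifs <;> omega
      have hgt1 : GG m (t + 1) = 2 * t + 2 := by simp only [GG]; split_ifs <;> omega
      have hphi : phi m t = 2 * t := by simp only [phi]; split_ifs <;> omega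
      have hTT : TT m a (2 * t) = (ee m a (2 * t) + ee m a (2 * t + 1)) ^ 2 := by
        simp only [TT]; rw [if_neg (by omega), if_neg (by omega)]
      rw [hgt, hgt1, hphi, hTT]
      simp only [ee]
      rw [show 2 * t + 1 + 1 = 2 * t + 2 by omega]
      ring
    · by_cases h3 : 2 * t < m
      · -- top step
        have hphi : phi m t = m - 2 := by simp only [phi]; split_ifs <;> omega
        have hTT : TT m a (m - 2) = (ee m a (m - 2)) ^ 2 := by
          simp only [TT]; rw [if_neg (by omega)]; simp
        rw [hphi, hTT]
        have h2t : 2 * t = m - 2 ∨ 2 * t = m - 1 := by omega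
        rcases h2t with h | h
        · have hgt : GG m t = m - 2 := by simp only [GG]; split_ifs <;> omega
          have hgt1 : GG m (t + 1) = m - 1 := by simp only [GG]; split_ifs <;> omega
          rw [hgt, hgt1]
          simp only [ee]
          rw [show m - 2 + 1 = m - 1 by omega]
          ring
        · have hgt : GG m t = m - 1 := by simp only [GG]; split_ifs <;> omega
          have hgt1 : GG m (t + 1) = m - 2 := by simp only [GG]; split_ifs <;> omega
          rw [hgt, hgt1]
          simp only [ee]
          rw [show m - 2 + 1 = m - 1 by omega]
      · -- both high
        have hgt : GG m t = 2 * (m - 2 - t) + 1 + 2 := by simp only [GG]; split_ifs <;> omega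
        have hgt1 : GG m (t + 1) = 2 * (m - 2 - t) + 1 := by simp only [GG]; split_ifs <;> omega
        have hphi : phi m t = 2 * (m - 2 - t) + 1 := by simp only [phi]; split_ifs <;> omega
        have hj3 : 2 * (m - 2 - t) + 1 ≤ m - 3 := by omega
        have hTT : TT m a (2 * (m - 2 - t) + 1)
            = (ee m a (2 * (m - 2 - t) + 1) + ee m a (2 * (m - 2 - t) + 1 + 1)) ^ 2 := by
          simp only [TT]; rw [if_neg (by omega), if_neg (by omega)]
        rw [hgt, hgt1, hphi, hTT]
        simp only [ee]
        rw [show 2 * (m - 2 - t) + 1 + 1 + 1 = 2 * (m - 2 - t) + 1 + 2 by omega]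
        ring

lemma greedy_L {m : ℕ} [NeZero m] (hm : 2 ≤ m) (g : Equiv.Perm (Fin m)) (hg : IsGreedy g)
    (a : Fin m → ℝ) :
    cyclicL m g a = ∑ j ∈ Finset.range m, TT m a j := by
  rw [cyclicL_eq hm]
  have hterm : ∀ k : Fin m, (AA m a (ww g (k + 1)) - AA m a (ww g k)) ^ 2
      = (AA m a (GG m (((k : ℕ) + 1) % m)) - AA m a (GG m (k : ℕ))) ^ 2 := by
    intro k
    have h1 : ww g (k + 1) = GG m (((k : ℕ) + 1) % m) := by
      rw [ww, greedy_val hm g hg]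
      congr 1
      rw [Fin.val_add, Fin.val_one', Nat.mod_eq_of_lt (show 1 < m by omega)]
    have h2 : ww g k = GG m (k : ℕ) := greedy_val hm g hg k
    rw [h1, h2]
  rw [Finset.sum_congr rfl (fun k _ => hterm k)]
  rw [Fin.sum_univ_eq_sum_range (fun t => (AA m a (GG m ((t + 1) % m)) - AA m a (GG m t)) ^ 2) m]
  apply Finset.sum_nbij' (phi m) (psi m)
  · intro t ht
    rw [Finset.mem_range] at *
    simp only [phi]; split_ifs <;> omega
  · intro j hj
    rw [Finset.mem_range] at *
    simp only [psi]; split_ifs <;> omega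
  · intro t ht
    rw [Finset.mem_range] at ht
    simp only [phi, psi]; split_ifs <;> omega
  · intro j hj
    rw [Finset.mem_range] at hj
    simp only [phi, psi]; split_ifs <;> omega
  · intro t ht
    rw [Finset.mem_range] at ht
    exact step_eq hm a ht

lemma TT_sum {m : ℕ} (hm : 2 ≤ m) (a : Fin m → ℝ) :
    ∑ j ∈ Finset.range m, TT m a j
      = 2 * ∑ j ∈ Finset.range (m - 1), (ee m a j) ^ 2
        + 2 * ∑ j ∈ Finset.range (m - 2), ee m a j * ee m a (j + 1) := by
  have hr : Finset.range m = Finset.range (m - 2 + 1 + 1) := by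
    rw [show m - 2 + 1 + 1 = m by omega]
  rw [hr, Finset.sum_range_succ, Finset.sum_range_succ]
  have h1 : TT m a (m - 2 + 1) = (ee m a 0) ^ 2 := by
    simp only [TT]; rw [if_pos (by omega)]
  have h2 : TT m a (m - 2) = (ee m a (m - 2)) ^ 2 := by
    simp only [TT]; rw [if_neg (by omega)]; simp
  have h3 : ∀ j ∈ Finset.range (m - 2), TT m a j = (ee m a j + ee m a (j + 1)) ^ 2 := by
    intro j hj; rw [Finset.mem_range] at hj
    simp only [TT]; rw [if_neg (by omega), if_neg (by omega)]
  rw [h1, h2, Finset.sum_congr rfl h3]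
  have hA : ∑ j ∈ Finset.range (m - 2), (ee m a j + ee m a (j + 1)) ^ 2
      = ∑ j ∈ Finset.range (m - 2), (ee m a j) ^ 2
        + ∑ j ∈ Finset.range (m - 2), (ee m a (j + 1)) ^ 2
        + 2 * ∑ j ∈ Finset.range (m - 2), ee m a j * ee m a (j + 1) := by
    rw [Finset.mul_sum, ← Finset.sum_add_distrib, ← Finset.sum_add_distrib]
    apply Finset.sum_congr rfl; intro j _; ring
  rw [hA]
  have hB : ∑ j ∈ Finset.range (m - 1), (ee m a j) ^ 2
      = ∑ j ∈ Finset.range (m - 2), (ee m a j) ^ 2 + (ee m a (m - 2)) ^ 2 := by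
    rw [show m - 1 = m - 2 + 1 by omega, Finset.sum_range_succ]
  have hC : ∑ j ∈ Finset.range (m - 1), (ee m a j) ^ 2
      = ∑ j ∈ Finset.range (m - 2), (ee m a (j + 1)) ^ 2 + (ee m a 0) ^ 2 := by
    rw [show m - 1 = m - 2 + 1 by omega, Finset.sum_range_succ']
  linarith [hB, hC]

/-- The circular symmetric (greedy) ordering minimises the sum of squared cyclic
differences. -/
theorem stmt_19 (m : ℕ) (hm : 2 ≤ m) (a : Fin m → ℝ) (ha : ∀ i, 0 < a i)
    (hdec : Antitone a) (g : Equiv.Perm (Fin m)) (hg : IsGreedy g)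
    (σ : Equiv.Perm (Fin m)) :
    cyclicL m g a ≤ cyclicL m σ a := by
  haveI : NeZero m := ⟨by omega⟩
  rw [greedy_L hm g hg a, TT_sum hm a]
  exact sigma_lb hm hdec σ
end
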